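/- Let A and B be skew shapes. If the difference s_A − s_B of their skew Schur functions is Schur-positive, then rows_k(A) ⊴ rows_k(B) in the dominance order for all k ≥ 1. -/

import Mathlib

open Finset

/-- The weakly decreasing rearrangement of a finite sequence (list) of natural numbers,
i.e. the partition obtained by sorting its parts into weakly decreasing order. -/
def sortDesc (l : List ℕ) : List ℕ := l.mergeSort (fun a b => b ≤ a)

/-- The (extended) dominance order on partitions, represented as weakly decreasing lists
of natural numbers (parts beyond the length of the list are taken to be `0`):
`Dom a b` means `a ⊴ b`, i.e. `a₁ + ⋯ + a_k ≤ b₁ + ⋯ + b_k` for all `k`. -/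
def Dom (a b : List ℕ) : Prop := ∀ k : ℕ, (a.take k).sum ≤ (b.take k).sum

/-- The conjugate (transpose) of a partition given as a list of natural numbers:
the `j`-th entry (0-indexed) is the number of parts that are `> j`. -/
def conj (l : List ℕ) : List ℕ :=
  (List.range (l.foldr max 0)).map (fun j => (l.filter (fun x => j < x)).length)

/-- A skew shape `λ/μ`: a pair of Young diagrams `μ ⊆ λ`. -/
structure SkewShape where
  outer : YoungDiagram
  inner : YoungDiagram
  le : inner ≤ outer

namespace SkewShape

/-- The cells (boxes) of a skew shape: boxes of the outer diagram not in the inner one. -/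
def cells (A : SkewShape) : Finset (ℕ × ℕ) := A.outer.cells \ A.inner.cells

/-- The number of rows of (the outer shape of) a skew shape. -/
def numRows (A : SkewShape) : ℕ := A.outer.colLen 0

/-- The number of columns of (the outer shape of) a skew shape. -/
def numCols (A : SkewShape) : ℕ := A.outer.rowLen 0

/-- `A.overlap k i` is the number of columns occupied in common by the `k` consecutive
rows `i, i+1, …, i+k-1` of the skew shape `A` (rows indexed from 0). -/
def overlap (A : SkewShape) (k i : ℕ) : ℕ :=
  ((Finset.range A.numCols).filter (fun j => ∀ t, t < k → (i + t, j) ∈ A.cells)).card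

/-- `rows_k(A)`: the weakly decreasing rearrangement of the row-overlap numbers
`(overlap k 0, overlap k 1, …)`; zero parts are discarded (a partition is identified
with its zero-padded versions).  `A.rowsK 1` is the partition of row lengths of `A`. -/
def rowsK (A : SkewShape) (k : ℕ) : List ℕ :=
  sortDesc (((List.range (A.numRows + 1 - k)).map (A.overlap k)).filter (fun x => 0 < x))

/-- The transpose (conjugate) of a skew shape. -/
def transpose (A : SkewShape) : SkewShape :=
  ⟨A.outer.transpose, A.inner.transpose, YoungDiagram.transpose_mono A.le⟩

/-- `cols_l(A)`: the weakly decreasing rearrangement of the column-overlap numbers of `A`;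
`A.colsK 1` is the partition of column lengths of `A`. -/
def colsK (A : SkewShape) (l : ℕ) : List ℕ := A.transpose.rowsK l

/-- `rects k l A` is the number of `k × l` rectangular subdiagrams (contiguous `k × l`
blocks of boxes) contained inside the skew shape `A`, recorded by the position of
their top-left corner. -/
def rects (A : SkewShape) (k l : ℕ) : ℕ :=
  (((Finset.range A.numRows) ×ˢ (Finset.range A.numCols)).filter
    (fun p => ∀ t, t < k → ∀ u, u < l → (p.1 + t, p.2 + u) ∈ A.cells)).card

end SkewShape

/-- A semistandard Young tableau of skew shape `A`: a filling of the boxes of `A`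
with positive integers, weakly increasing along rows and strictly increasing down
columns (entries outside `A` are recorded as `0`). -/
structure SkewSsyt (A : SkewShape) where
  entry : ℕ → ℕ → ℕ
  pos : ∀ i j, (i, j) ∈ A.cells → 1 ≤ entry i j
  zeros : ∀ i j, (i, j) ∉ A.cells → entry i j = 0
  row_weak : ∀ i j1 j2, j1 ≤ j2 → (i, j1) ∈ A.cells → (i, j2) ∈ A.cells →
      entry i j1 ≤ entry i j2
  col_strict : ∀ i1 i2 j, i1 < i2 → (i1, j) ∈ A.cells → (i2, j) ∈ A.cells →
      entry i1 j < entry i2 j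

/-- The number of boxes of `T` filled with the entry `v`. -/
def contentCount {A : SkewShape} (T : SkewSsyt A) (v : ℕ) : ℕ :=
  (A.cells.filter (fun c => T.entry c.1 c.2 = v)).card

/-- `T` has content `ν` (a partition written as a list, 0-indexed: `ν.getD v 0` is the
`(v+1)`-st part): the number of entries equal to `v + 1` is the `(v+1)`-st part of `ν`. -/
def HasContent {A : SkewShape} (T : SkewSsyt A) (ν : List ℕ) : Prop :=
  ∀ v : ℕ, contentCount T (v + 1) = ν.getD v 0

/-- `readBefore c c'` : the box `c` comes strictly before the box `c'` in the reverse
reading order (rows top to bottom, each row read right to left). -/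
def readBefore (c c' : ℕ × ℕ) : Prop := c.1 < c'.1 ∨ (c.1 = c'.1 ∧ c'.2 < c.2)

instance (c c' : ℕ × ℕ) : Decidable (readBefore c c') := by
  unfold readBefore; infer_instance

/-- `T` is a Littlewood–Richardson filling: its reverse reading word is a lattice word,
i.e. at every box `c` carrying an entry `v + 2`, the number of occurrences of `v + 2`
read so far (weakly up to `c`) is at most the number of occurrences of `v + 1` read
strictly before `c`. -/
def IsLR {A : SkewShape} (T : SkewSsyt A) : Prop :=
  ∀ c ∈ A.cells, ∀ v : ℕ, T.entry c.1 c.2 = v + 2 →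
    (A.cells.filter (fun c' => T.entry c'.1 c'.2 = v + 2 ∧ (readBefore c' c ∨ c' = c))).card ≤
    (A.cells.filter (fun c' => T.entry c'.1 c'.2 = v + 1 ∧ readBefore c' c)).card

/-- The support of the skew Schur function `s_A`: by the Littlewood–Richardson rule,
the set of partitions `ν` (weakly decreasing lists) admitting an LR filling of `A`
of content `ν`, i.e. those `ν` with `s_ν` appearing with nonzero coefficient in `s_A`. -/
def SkewShape.support (A : SkewShape) : Set (List ℕ) :=
  { ν | ν.Pairwise (· ≥ ·) ∧ ∃ T : SkewSsyt A, IsLR T ∧ HasContent T ν }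

/-- The coefficient of the Schur function `s_ν` in the Schur expansion of `s_A`:
by the Littlewood–Richardson rule, the number of LR fillings of `A` of content `ν`. -/
noncomputable def lrCoeff (A : SkewShape) (ν : List ℕ) : ℕ :=
  Nat.card { T : SkewSsyt A // IsLR T ∧ HasContent T ν }

/-- `s_A − s_B` is Schur-positive: every coefficient in the Schur expansion of the
difference is nonnegative, i.e. (by the LR rule) each LR coefficient of `B` is at most
the corresponding one of `A`. -/
def SchurPositiveDiff (A B : SkewShape) : Prop :=
  ∀ ν : List ℕ, ν.Pairwise (· ≥ ·) → lrCoeff B ν ≤ lrCoeff A ν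

/-- The skew Schur function `s_A = Σ_T x^T`, as a formal power series in the variables
`x_0, x_1, x_2, …` (variable `x_v` recording entries equal to `v + 1`): the coefficient
of the monomial with exponents `d` is the number of SSYT of shape `A` and content `d`. -/
noncomputable def skewSchur (A : SkewShape) : MvPowerSeries ℕ ℤ :=
  fun d => (Nat.card { T : SkewSsyt A // ∀ v : ℕ, contentCount T (v + 1) = d v } : ℤ)

/-- The boxes remaining after deleting the top box of every non-empty column of `A`:
a box survives iff there is a box of `A` directly above it. -/
def trimCells (A : SkewShape) : Finset (ℕ × ℕ) :=
  A.cells.filter (fun c => 1 ≤ c.1 ∧ (c.1 - 1, c.2) ∈ A.cells)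

/-- The set of boxes of the skew shape `A ∗ B`, obtained by positioning `B` immediately
below and to the left of `A` so that `A` and `B` share no common row or column. -/
def starCells (A B : SkewShape) : Finset (ℕ × ℕ) :=
  A.cells.image (fun c => (c.1, c.2 + B.numCols)) ∪
    B.cells.image (fun c => (c.1 + A.numRows, c.2))

/-- The straight shape (partition) `μ`, viewed as the skew shape `μ/(0)`. -/
def ofYD (μ : YoungDiagram) : SkewShape := ⟨μ, ⊥, bot_le⟩

/-- The list of parts `(μ_k, μ_{k+1}, …, μ_l)` (1-indexed) of a partition `μ` given as a
Young diagram, parts beyond the length of `μ` being `0`. -/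
def tailParts (μ : YoungDiagram) (k l : ℕ) : List ℕ :=
  (List.range (l + 1 - k)).map (fun t => μ.rowLen (k - 1 + t))


section Helpers



theorem sortDesc_sorted (l : List ℕ) : List.Pairwise (· ≥ ·) (sortDesc l) := by
  have h := List.pairwise_mergeSort (le := fun a b : ℕ => decide (b ≤ a))
    (fun a b c hab hbc => by simpa using le_trans (by simpa using hbc) (by simpa using hab))
    (fun a b => by simpa using le_total b a) l
  unfold sortDesc
  refine List.Pairwise.imp ?_ h
  intro a b hb; simpa using hb

theorem sortDesc_perm (l : List ℕ) : (sortDesc l).Perm l := List.mergeSort_perm l _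

theorem take_sum_getD (l : List ℕ) (m : ℕ) :
    (l.take m).sum = ∑ t ∈ Finset.range m, l.getD t 0 := by
  induction m with
  | zero => simp
  | succ m ih =>
    rw [Finset.sum_range_succ, ← ih]
    by_cases h : m < l.length
    · rw [List.sum_take_succ l m h, List.getD_eq_getElem l 0 h]
    · push_neg at h
      rw [List.getD_eq_default l 0 h, List.take_of_length_le h,
        List.take_of_length_le (le_trans h (Nat.le_succ m))]
      simp

theorem sorted_getD_ge_iff {l : List ℕ} (hl : List.Pairwise (· ≥ ·) l) {t : ℕ} (ht : 1 ≤ t) :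
    ∀ v : ℕ, t ≤ l.getD v 0 ↔ v + 1 ≤ l.countP (fun x => t ≤ x) := by
  induction l with
  | nil => intro v; simp; omega
  | cons a l ih =>
    have ha : ∀ x ∈ l, x ≤ a := fun x hx => List.rel_of_pairwise_cons hl hx
    have hl' : List.Pairwise (· ≥ ·) l := hl.of_cons
    intro v
    match v with
    | 0 =>
      simp only [List.getD_cons_zero, List.countP_cons]
      by_cases h : t ≤ a
      · simp [h]
      · have h0 : l.countP (fun x => t ≤ x) = 0 := by
          rw [List.countP_eq_zero]
          intro x hx; simpa using lt_of_le_of_lt (ha x hx) (by omega)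
        simp [h, h0]
    | v + 1 =>
      simp only [List.getD_cons_succ, List.countP_cons]
      by_cases h : t ≤ a
      · rw [ih hl' v]; simp [h]
      · have h0 : l.countP (fun x => t ≤ x) = 0 := by
          rw [List.countP_eq_zero]
          intro x hx; simpa using lt_of_le_of_lt (ha x hx) (by omega)
        have hgd : ¬ t ≤ l.getD v 0 := by
          rw [ih hl' v, h0]; omega
        constructor
        · intro hx; exact absurd hx hgd
        · intro hx; exfalso; simp [h, h0] at hx

/-- getD of a sorted-descending list as a count ("conjugate" identity):
`l.getD v 0 = #{t ∈ [1,C] : countP (t ≤ ·) l ≥ v+1}` provided all entries are `≤ C`. -/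
theorem sorted_getD_eq_card {l : List ℕ} (hl : List.Pairwise (· ≥ ·) l) {C : ℕ}
    (hC : ∀ x ∈ l, x ≤ C) (v : ℕ) :
    l.getD v 0 = ((Finset.range C).filter (fun t => v + 1 ≤ l.countP (fun x => t + 1 ≤ x))).card := by
  have hgd : l.getD v 0 ≤ C := by
    by_cases h : v < l.length
    · rw [List.getD_eq_getElem l 0 h]; exact hC _ (List.getElem_mem h)
    · rw [List.getD_eq_default l 0 (by omega)]; omega
  have : (Finset.range C).filter (fun t => v + 1 ≤ l.countP (fun x => t + 1 ≤ x)) =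
      Finset.range (l.getD v 0) := by
    ext t
    simp only [Finset.mem_filter, Finset.mem_range]
    rw [← sorted_getD_ge_iff hl (by omega : 1 ≤ t + 1) v]
    omega
  rw [this, Finset.card_range]

theorem subperm_sum_exists {f : ℕ → ℕ} {n : ℕ} {s : List ℕ}
    (h : s.Subperm ((List.range n).map f)) :
    ∃ R : Finset ℕ, R ⊆ Finset.range n ∧ R.card = s.length ∧ s.sum = ∑ i ∈ R, f i := by
  obtain ⟨t, hts, htl⟩ := h
  obtain ⟨l', hl', rfl⟩ := List.sublist_map_iff.mp htl
  have hnd : l'.Nodup := List.Nodup.sublist hl' List.nodup_range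
  refine ⟨l'.toFinset, ?_, ?_, ?_⟩
  · intro x hx
    rw [List.mem_toFinset] at hx
    simpa using hl'.subset hx
  · rw [List.toFinset_card_of_nodup hnd, ← hts.length_eq]
    simp
  · rw [← hts.sum_eq, List.sum_toFinset _ hnd]




/-! ### The reading order as a linear order -/

abbrev RB := Lex (ℕ × ℕᵒᵈ)

def toRB (c : ℕ × ℕ) : RB := toLex (c.1, OrderDual.toDual c.2)

def ofRB (x : RB) : ℕ × ℕ := ((ofLex x).1, OrderDual.ofDual (ofLex x).2)

@[simp] theorem ofRB_toRB (c : ℕ × ℕ) : ofRB (toRB c) = c := rfl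
@[simp] theorem toRB_ofRB (x : RB) : toRB (ofRB x) = x := rfl

theorem toRB_inj : Function.Injective toRB := by
  intro a b h
  have := congrArg ofRB h; simpa using this

theorem toRB_lt_iff {c c' : ℕ × ℕ} : toRB c < toRB c' ↔ readBefore c c' := by
  rw [toRB, toRB, Prod.Lex.lt_iff]
  exact Iff.rfl

theorem toRB_le_iff {c c' : ℕ × ℕ} : toRB c ≤ toRB c' ↔ readBefore c c' ∨ c = c' := by
  rcases eq_or_ne c c' with rfl | h
  · simp
  · constructor
    · intro hle
      rcases lt_or_eq_of_le hle with hlt | he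
      · exact Or.inl (toRB_lt_iff.mp hlt)
      · exact Or.inr (toRB_inj he)
    · rintro (hb | rfl)
      · exact le_of_lt (toRB_lt_iff.mpr hb)
      · exact le_refl _

/-! ### the k-th smallest element of a finite set in a linear order -/

theorem exists_kth {α : Type*} [LinearOrder α] [DecidableEq α] (s : Finset α) :
    ∀ (r : ℕ), 1 ≤ r → r ≤ s.card →
      ∃ y ∈ s, ((s.filter (fun z => z ≤ y)).card = r ∧ (s.filter (fun z => z < y)).card = r - 1) := by
  induction s using Finset.strongInductionOn with
  | _ s ih =>
    intro r h1 h2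
    have hne : s.Nonempty := Finset.card_pos.mp (lt_of_lt_of_le h1 h2)
    set ymax := s.max' hne with hy
    rcases eq_or_lt_of_le h2 with heq | hlt
    · refine ⟨ymax, s.max'_mem hne, ?_, ?_⟩
      · have : s.filter (fun z => z ≤ ymax) = s := by
          apply Finset.filter_true_of_mem
          intro z hz; exact s.le_max' z hz
        rw [this, heq]
      · have : s.filter (fun z => z < ymax) = s.erase ymax := by
          ext z
          simp only [Finset.mem_filter, Finset.mem_erase]
          constructor
          · rintro ⟨hz, hlt'⟩; exact ⟨ne_of_lt hlt', hz⟩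
          · rintro ⟨hne', hz⟩; exact ⟨hz, lt_of_le_of_ne (s.le_max' z hz) hne'⟩
        rw [this, Finset.card_erase_of_mem (s.max'_mem hne), heq]
    · have hmax : ymax ∈ s := s.max'_mem hne
      have hss : s.erase ymax ⊂ s := Finset.erase_ssubset hmax
      have hcard : (s.erase ymax).card = s.card - 1 := Finset.card_erase_of_mem hmax
      obtain ⟨y, hy1, hy2, hy3⟩ := ih _ hss r h1 (by omega)
      have hyne : y ≠ ymax := Finset.ne_of_mem_erase hy1
      have hylt : y < ymax := lt_of_le_of_ne (s.le_max' y (Finset.mem_of_mem_erase hy1)) hyne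
      refine ⟨y, Finset.mem_of_mem_erase hy1, ?_, ?_⟩
      · rw [← hy2]
        congr 1
        ext z
        simp only [Finset.mem_filter, Finset.mem_erase]
        constructor
        · rintro ⟨hz, hle⟩
          refine ⟨⟨?_, hz⟩, hle⟩
          rintro rfl; exact absurd hylt (not_lt_of_ge hle)
        · rintro ⟨⟨_, hz⟩, hle⟩; exact ⟨hz, hle⟩
      · rw [← hy3]
        congr 1
        ext z
        simp only [Finset.mem_filter, Finset.mem_erase]
        constructor
        · rintro ⟨hz, hle⟩
          refine ⟨⟨?_, hz⟩, hle⟩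
          rintro rfl; exact absurd (lt_trans hle hylt) (lt_irrefl _)
        · rintro ⟨⟨_, hz⟩, hle⟩; exact ⟨hz, hle⟩

theorem kth_unique {α : Type*} [LinearOrder α] [DecidableEq α] {s : Finset α} {y y' : α}
    (hy : y ∈ s) (hy' : y' ∈ s)
    (h : (s.filter (fun z => z ≤ y)).card = (s.filter (fun z => z ≤ y')).card) : y = y' := by
  rcases lt_trichotomy y y' with hlt | he | hlt
  · exfalso
    have hsub : insert y' (s.filter (fun z => z ≤ y)) ⊆ s.filter (fun z => z ≤ y') := by
      intro z hz
      rcases Finset.mem_insert.mp hz with rfl | hz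
      · exact Finset.mem_filter.mpr ⟨hy', le_refl _⟩
      · obtain ⟨hz1, hz2⟩ := Finset.mem_filter.mp hz
        exact Finset.mem_filter.mpr ⟨hz1, le_trans hz2 (le_of_lt hlt)⟩
    have hni : y' ∉ s.filter (fun z => z ≤ y) := by
      intro hmem
      exact absurd ((Finset.mem_filter.mp hmem).2) (not_le_of_gt hlt)
    have := Finset.card_le_card hsub
    rw [Finset.card_insert_of_notMem hni] at this
    omega
  · exact he
  · exfalso
    have hsub : insert y (s.filter (fun z => z ≤ y')) ⊆ s.filter (fun z => z ≤ y) := by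
      intro z hz
      rcases Finset.mem_insert.mp hz with rfl | hz
      · exact Finset.mem_filter.mpr ⟨hy, le_refl _⟩
      · obtain ⟨hz1, hz2⟩ := Finset.mem_filter.mp hz
        exact Finset.mem_filter.mpr ⟨hz1, le_trans hz2 (le_of_lt hlt)⟩
    have hni : y ∉ s.filter (fun z => z ≤ y') := by
      intro hmem
      exact absurd ((Finset.mem_filter.mp hmem).2) (not_le_of_gt hlt)
    have := Finset.card_le_card hsub
    rw [Finset.card_insert_of_notMem hni] at this
    omega



/-! ### Abstract fillings -/

structure AbsFill where
  cells : Finset (ℕ × ℕ)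
  e : ℕ × ℕ → ℕ
  pos : ∀ c ∈ cells, 1 ≤ e c
  row_weak : ∀ i j1 j2, j1 ≤ j2 → (i, j1) ∈ cells → (i, j2) ∈ cells →
      e (i, j1) ≤ e (i, j2)
  col_strict : ∀ i1 i2 j, i1 < i2 → (i1, j) ∈ cells → (i2, j) ∈ cells →
      e (i1, j) < e (i2, j)
  lattice : ∀ c ∈ cells, ∀ v : ℕ, e c = v + 2 →
    (cells.filter (fun c' => e c' = v + 2 ∧ (readBefore c' c ∨ c' = c))).card ≤
    (cells.filter (fun c' => e c' = v + 1 ∧ readBefore c' c)).card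

namespace AbsFill

variable (F : AbsFill)

def count (v : ℕ) : ℕ := (F.cells.filter (fun c => F.e c = v)).card

def Sv (w : ℕ) : Finset RB := (F.cells.filter (fun c => F.e c = w)).image toRB

def rank (c : ℕ × ℕ) : ℕ := ((F.Sv (F.e c)).filter (fun z => z ≤ toRB c)).card

theorem card_Sv (w : ℕ) : (F.Sv w).card = F.count w :=
  Finset.card_image_of_injective _ toRB_inj

theorem mem_Sv {x : RB} {w : ℕ} :
    x ∈ F.Sv w ↔ ofRB x ∈ F.cells ∧ F.e (ofRB x) = w := by
  unfold Sv
  simp only [Finset.mem_image, Finset.mem_filter]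
  constructor
  · rintro ⟨a, ⟨ha, he⟩, rfl⟩; simpa using ⟨ha, he⟩
  · rintro ⟨h1, h2⟩; exact ⟨ofRB x, ⟨h1, h2⟩, by simp⟩

theorem Sv_filter_le (c : ℕ × ℕ) (w : ℕ) :
    (F.Sv w).filter (fun z => z ≤ toRB c) =
      (F.cells.filter (fun c' => F.e c' = w ∧ (readBefore c' c ∨ c' = c))).image toRB := by
  ext x
  simp only [Sv, Finset.mem_filter, Finset.mem_image]
  constructor
  · rintro ⟨⟨a, ⟨ha, he⟩, rfl⟩, hle⟩
    exact ⟨a, ⟨ha, he, toRB_le_iff.mp hle⟩, rfl⟩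
  · rintro ⟨a, ⟨ha, he, hb⟩, rfl⟩
    exact ⟨⟨a, ⟨ha, he⟩, rfl⟩, toRB_le_iff.mpr hb⟩

theorem Sv_filter_lt (c : ℕ × ℕ) (w : ℕ) :
    (F.Sv w).filter (fun z => z < toRB c) =
      (F.cells.filter (fun c' => F.e c' = w ∧ readBefore c' c)).image toRB := by
  ext x
  simp only [Sv, Finset.mem_filter, Finset.mem_image]
  constructor
  · rintro ⟨⟨a, ⟨ha, he⟩, rfl⟩, hlt⟩
    exact ⟨a, ⟨ha, he, toRB_lt_iff.mp hlt⟩, rfl⟩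
  · rintro ⟨a, ⟨ha, he, hb⟩, rfl⟩
    exact ⟨⟨a, ⟨ha, he⟩, rfl⟩, toRB_lt_iff.mpr hb⟩

theorem rank_pos {c : ℕ × ℕ} (hc : c ∈ F.cells) : 1 ≤ F.rank c := by
  rw [rank]
  exact Finset.card_pos.mpr ⟨toRB c, Finset.mem_filter.mpr
    ⟨F.mem_Sv.mpr (by simp only [ofRB_toRB]; exact ⟨hc, trivial⟩), le_refl _⟩⟩

theorem rank_le_lt_card {c : ℕ × ℕ} (hc : c ∈ F.cells) (h2 : 2 ≤ F.e c) :
    F.rank c ≤ ((F.Sv (F.e c - 1)).filter (fun z => z < toRB c)).card := by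
  have hv : F.e c = (F.e c - 2) + 2 := by omega
  have hl := F.lattice c hc (F.e c - 2) hv
  rw [rank, Sv_filter_le, Sv_filter_lt,
    Finset.card_image_of_injective _ toRB_inj, Finset.card_image_of_injective _ toRB_inj]
  have h1 : F.e c - 2 + 2 = F.e c := by omega
  have h2' : F.e c - 2 + 1 = F.e c - 1 := by omega
  rw [h1, h2'] at hl
  exact hl

theorem rank_le_card {c : ℕ × ℕ} (hc : c ∈ F.cells) (h2 : 2 ≤ F.e c) :
    F.rank c ≤ (F.Sv (F.e c - 1)).card :=
  le_trans (F.rank_le_lt_card hc h2) (Finset.card_le_card (Finset.filter_subset _ _))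

noncomputable def phi (c : ℕ × ℕ) : ℕ × ℕ :=
  if h : 1 ≤ F.rank c ∧ F.rank c ≤ (F.Sv (F.e c - 1)).card then
    ofRB (exists_kth (F.Sv (F.e c - 1)) (F.rank c) h.1 h.2).choose
  else c

theorem phi_spec {c : ℕ × ℕ} (hc : c ∈ F.cells) (h2 : 2 ≤ F.e c) :
    F.phi c ∈ F.cells ∧ F.e (F.phi c) = F.e c - 1 ∧ readBefore (F.phi c) c ∧
      F.rank (F.phi c) = F.rank c := by
  have h : 1 ≤ F.rank c ∧ F.rank c ≤ (F.Sv (F.e c - 1)).card :=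
    ⟨F.rank_pos hc, F.rank_le_card hc h2⟩
  rw [phi, dif_pos h]
  obtain ⟨hy1, hy2, hy3⟩ := (exists_kth (F.Sv (F.e c - 1)) (F.rank c) h.1 h.2).choose_spec
  set y := (exists_kth (F.Sv (F.e c - 1)) (F.rank c) h.1 h.2).choose with hydef
  have hmem := F.mem_Sv.mp hy1
  have hylt : y < toRB c := by
    by_contra hcon
    push_neg at hcon
    have hsub : (F.Sv (F.e c - 1)).filter (fun z => z < toRB c) ⊆
        (F.Sv (F.e c - 1)).filter (fun z => z < y) := by
      intro z hz
      obtain ⟨hz1, hz2⟩ := Finset.mem_filter.mp hz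
      exact Finset.mem_filter.mpr ⟨hz1, lt_of_lt_of_le hz2 hcon⟩
    have := le_trans (F.rank_le_lt_card hc h2) (Finset.card_le_card hsub)
    rw [hy3] at this
    have := F.rank_pos hc
    omega
  refine ⟨hmem.1, hmem.2, toRB_lt_iff.mp (by simpa using hylt), ?_⟩
  rw [rank, hmem.2]
  simp only [toRB_ofRB]
  convert hy2 using 2
  exact Finset.filter_congr (fun _ _ => Iff.rfl)

theorem phi_row_lt {c : ℕ × ℕ} (hc : c ∈ F.cells) (h2 : 2 ≤ F.e c) :
    (F.phi c).1 < c.1 := by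
  obtain ⟨hm, he, hb, _⟩ := F.phi_spec hc h2
  rcases hb with hlt | ⟨heq, hcol⟩
  · exact hlt
  · exfalso
    have hpair : (c.1, (F.phi c).2) = F.phi c := by rw [← heq]
    have hm' : (c.1, (F.phi c).2) ∈ F.cells := by rw [hpair]; exact hm
    have hw := F.row_weak c.1 c.2 (F.phi c).2 (le_of_lt hcol) (by simpa using hc) hm'
    have he2 : F.e (c.1, (F.phi c).2) = F.e c - 1 := by rw [hpair, he]
    have hce : ((c.1, c.2) : ℕ × ℕ) = c := rfl
    rw [hce, he2] at hw
    omega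

theorem rank_inj {c c' : ℕ × ℕ} (hc : c ∈ F.cells) (hc' : c' ∈ F.cells)
    (he : F.e c = F.e c') (hr : F.rank c = F.rank c') : c = c' := by
  have h1 : toRB c ∈ F.Sv (F.e c) := F.mem_Sv.mpr (by simp only [ofRB_toRB]; exact ⟨hc, trivial⟩)
  have h2 : toRB c' ∈ F.Sv (F.e c) := F.mem_Sv.mpr (by simp only [ofRB_toRB]; exact ⟨hc', he.symm⟩)
  have := kth_unique h1 h2 ?_
  · exact toRB_inj this
  · rw [rank] at hr
    rw [hr, rank, he]

theorem phi_inj {c c' : ℕ × ℕ} (hc : c ∈ F.cells) (hc' : c' ∈ F.cells)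
    (he : F.e c = F.e c') (h2 : 2 ≤ F.e c) (hp : F.phi c = F.phi c') : c = c' := by
  obtain ⟨hm1, he1, _, hr1⟩ := F.phi_spec hc h2
  obtain ⟨hm2, he2, _, hr2⟩ := F.phi_spec hc' (he ▸ h2)
  apply F.rank_inj hc hc' he
  rw [← hr1, ← hr2, hp]

end AbsFill

noncomputable def AbsFill.chainAux (F : AbsFill) : ℕ → (ℕ × ℕ) → (ℕ × ℕ)
  | 0, c => c
  | (n+1), c => F.chainAux n (F.phi c)

noncomputable def AbsFill.chainEnd (F : AbsFill) (c : ℕ × ℕ) : ℕ × ℕ :=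
  F.chainAux (F.e c - 1) c

namespace AbsFill

variable (F : AbsFill)

theorem chainAux_spec : ∀ (n : ℕ) (c : ℕ × ℕ), c ∈ F.cells → F.e c = n + 1 →
    F.chainAux n c ∈ F.cells ∧ F.e (F.chainAux n c) = 1 ∧ (F.chainAux n c).1 ≤ c.1 := by
  intro n
  induction n with
  | zero => intro c hc he; exact ⟨hc, he, le_refl _⟩
  | succ n ih =>
    intro c hc he
    obtain ⟨hm, hev, hb, _⟩ := F.phi_spec hc (by omega)
    have := ih (F.phi c) hm (by omega)
    refine ⟨this.1, this.2.1, le_trans this.2.2 ?_⟩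
    exact le_of_lt (F.phi_row_lt hc (by omega))

theorem chainEnd_eq_phi {c : ℕ × ℕ} (hc : c ∈ F.cells) (h2 : 2 ≤ F.e c) :
    F.chainEnd c = F.chainEnd (F.phi c) := by
  obtain ⟨hm, hev, _, _⟩ := F.phi_spec hc h2
  rw [chainEnd, chainEnd, hev]
  have : F.e c - 1 = (F.e c - 1 - 1) + 1 := by omega
  rw [this]
  rfl

theorem chainEnd_spec {c : ℕ × ℕ} (hc : c ∈ F.cells) (h1 : 1 ≤ F.e c) :
    F.chainEnd c ∈ F.cells ∧ F.e (F.chainEnd c) = 1 ∧ (F.chainEnd c).1 ≤ c.1 :=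
  F.chainAux_spec (F.e c - 1) c hc (by omega)

theorem chainEnd_row_lt {c : ℕ × ℕ} (hc : c ∈ F.cells) (h2 : 2 ≤ F.e c) :
    (F.chainEnd c).1 < c.1 := by
  rw [F.chainEnd_eq_phi hc h2]
  obtain ⟨hm, hev, _, _⟩ := F.phi_spec hc h2
  have := (F.chainEnd_spec hm (by omega)).2.2
  exact lt_of_le_of_lt this (F.phi_row_lt hc h2)

theorem chainEnd_inj_same : ∀ (n : ℕ) (c c' : ℕ × ℕ), c ∈ F.cells → c' ∈ F.cells →
    F.e c = n + 1 → F.e c' = n + 1 → F.chainEnd c = F.chainEnd c' → c = c' := by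
  intro n
  induction n with
  | zero =>
    intro c c' hc hc' he he' h
    rw [chainEnd, chainEnd, he, he'] at h
    exact h
  | succ n ih =>
    intro c c' hc hc' he he' h
    rw [F.chainEnd_eq_phi hc (by omega), F.chainEnd_eq_phi hc' (by omega)] at h
    obtain ⟨hm, hev, _, _⟩ := F.phi_spec hc (by omega)
    obtain ⟨hm', hev', _, _⟩ := F.phi_spec hc' (by omega)
    have := ih (F.phi c) (F.phi c') hm hm' (by omega) (by omega) h
    exact F.phi_inj hc hc' (by omega) (by omega) this

theorem chainEnd_cross : ∀ (d : ℕ) (c c' : ℕ × ℕ), c ∈ F.cells → c' ∈ F.cells →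
    1 ≤ F.e c → F.e c' = F.e c + d + 1 → F.chainEnd c = F.chainEnd c' → c.1 < c'.1 := by
  intro d
  induction d with
  | zero =>
    intro c c' hc hc' h1 he h
    have h2' : 2 ≤ F.e c' := by omega
    rw [F.chainEnd_eq_phi hc' h2'] at h
    obtain ⟨hm', hev', _, _⟩ := F.phi_spec hc' h2'
    have := F.chainEnd_inj_same (F.e c - 1) c (F.phi c') hc hm' (by omega) (by omega) h
    rw [this]
    exact F.phi_row_lt hc' h2'
  | succ d ih =>
    intro c c' hc hc' h1 he h
    have h2' : 2 ≤ F.e c' := by omega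
    rw [F.chainEnd_eq_phi hc' h2'] at h
    obtain ⟨hm', hev', _, _⟩ := F.phi_spec hc' h2'
    have := ih c (F.phi c') hc hm' h1 (by omega) h
    exact lt_trans this (F.phi_row_lt hc' h2')

theorem claimD (R : Finset ℕ) (hR : R.Nonempty) :
    (F.cells.filter (fun c => c.1 ∈ R ∧ F.e c = 1)).card
      + (F.cells.filter (fun c => c.1 = R.min' hR ∧ 2 ≤ F.e c)).card ≤ F.count 1 := by
  set r₁ := R.min' hR with hr₁
  set M1 := F.cells.filter (fun c => c.1 ∈ R ∧ F.e c = 1) with hM1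
  set M2 := F.cells.filter (fun c => c.1 = r₁ ∧ 2 ≤ F.e c) with hM2
  have hdisj : Disjoint M1 M2 := by
    rw [Finset.disjoint_left]
    intro a ha1 ha2
    have h1 := (Finset.mem_filter.mp ha1).2.2
    have h2 := (Finset.mem_filter.mp ha2).2.2
    omega
  rw [← Finset.card_union_of_disjoint hdisj]
  apply Finset.card_le_card_of_injOn (fun c => if F.e c = 1 then c else F.chainEnd c)
  · intro a ha
    rcases Finset.mem_union.mp ha with ha | ha
    · obtain ⟨ham, _, hae⟩ := Finset.mem_filter.mp ha
      dsimp only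
      rw [if_pos hae]
      exact Finset.mem_filter.mpr ⟨ham, hae⟩
    · obtain ⟨ham, _, hae⟩ := Finset.mem_filter.mp ha
      dsimp only
      rw [if_neg (by omega)]
      obtain ⟨h1, h2, _⟩ := F.chainEnd_spec ham (by omega)
      exact Finset.mem_filter.mpr ⟨h1, h2⟩
  · intro a ha b hb hab
    have hab' : (if F.e a = 1 then a else F.chainEnd a)
        = (if F.e b = 1 then b else F.chainEnd b) := hab
    clear hab
    rename' hab' => hab
    simp only [Finset.coe_union, Set.mem_union, Finset.mem_coe] at ha hb
    have key : ∀ x, x ∈ M1 ∨ x ∈ M2 → x ∈ F.cells := by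
      rintro x (hx | hx) <;> exact (Finset.mem_filter.mp hx).1
    have haC := key a ha
    have hbC := key b hb
    rcases ha with ha | ha <;> rcases hb with hb | hb
    · have h1 := (Finset.mem_filter.mp ha).2.2
      have h2 := (Finset.mem_filter.mp hb).2.2
      rwa [if_pos h1, if_pos h2] at hab
    · -- a : 1-box in R-row ; b : big box in row r₁
      exfalso
      have h1 := (Finset.mem_filter.mp ha).2
      have h2 := (Finset.mem_filter.mp hb).2
      rw [if_pos h1.2, if_neg (by omega)] at hab
      have hlt := F.chainEnd_row_lt hbC (by omega)
      have : r₁ ≤ a.1 := hr₁ ▸ R.min'_le a.1 h1.1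
      rw [hab] at this
      omega
    · exfalso
      have h1 := (Finset.mem_filter.mp ha).2
      have h2 := (Finset.mem_filter.mp hb).2
      rw [if_pos h2.2, if_neg (by omega)] at hab
      have hlt := F.chainEnd_row_lt haC (by omega)
      have : r₁ ≤ b.1 := hr₁ ▸ R.min'_le b.1 h2.1
      rw [← hab] at this
      omega
    · have h1 := (Finset.mem_filter.mp ha).2
      have h2 := (Finset.mem_filter.mp hb).2
      rw [if_neg (by omega), if_neg (by omega)] at hab
      rcases lt_trichotomy (F.e a) (F.e b) with hlt | heq | hlt
      · exfalso
        have := F.chainEnd_cross (F.e b - F.e a - 1) a b haC hbC (by omega) (by omega) hab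
        omega
      · exact F.chainEnd_inj_same (F.e a - 1) a b haC hbC (by omega) (by omega) hab
      · exfalso
        have := F.chainEnd_cross (F.e a - F.e b - 1) b a hbC haC (by omega) (by omega) hab.symm
        omega

end AbsFill

namespace AbsFill

variable (F : AbsFill)

theorem exists_one (hne : F.cells.Nonempty) : ∃ c ∈ F.cells, F.e c = 1 := by
  obtain ⟨c₀, hc₀, hmin⟩ := F.cells.exists_min_image F.e hne
  by_contra h
  push_neg at h
  have h2 : 2 ≤ F.e c₀ := by
    have := F.pos c₀ hc₀
    have := h c₀ hc₀
    omega
  have hl := F.lattice c₀ hc₀ (F.e c₀ - 2) (by omega)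
  have hL : 1 ≤ (F.cells.filter (fun c' =>
      F.e c' = F.e c₀ - 2 + 2 ∧ (readBefore c' c₀ ∨ c' = c₀))).card := by
    refine Finset.card_pos.mpr ⟨c₀, Finset.mem_filter.mpr ⟨hc₀, by omega, Or.inr rfl⟩⟩
  have hR : (F.cells.filter (fun c' =>
      F.e c' = F.e c₀ - 2 + 1 ∧ readBefore c' c₀)).card = 0 := by
    rw [Finset.card_eq_zero, Finset.filter_eq_empty_iff]
    intro c' hc'
    have := hmin c' hc'
    rintro ⟨he', _⟩
    omega
  omega

end AbsFill

def AbsFill.remove1 (F : AbsFill) : AbsFill where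
  cells := F.cells.filter (fun c => F.e c ≠ 1)
  e := fun c => F.e c - 1
  pos := by
    intro c hc
    obtain ⟨hc1, hc2⟩ := Finset.mem_filter.mp hc
    have := F.pos c hc1
    omega
  row_weak := by
    intro i j1 j2 hj h1 h2
    obtain ⟨h1', _⟩ := Finset.mem_filter.mp h1
    obtain ⟨h2', _⟩ := Finset.mem_filter.mp h2
    have := F.row_weak i j1 j2 hj h1' h2'
    omega
  col_strict := by
    intro i1 i2 j hij h1 h2
    obtain ⟨h1', h1e⟩ := Finset.mem_filter.mp h1
    obtain ⟨h2', _⟩ := Finset.mem_filter.mp h2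
    have hA := F.col_strict i1 i2 j hij h1' h2'
    have hB := F.pos _ h1'
    omega
  lattice := by
    intro c hc v hv
    obtain ⟨hc1, hc2⟩ := Finset.mem_filter.mp hc
    have hp := F.pos c hc1
    have hec : F.e c = v + 3 := by omega
    have hs1 : (F.cells.filter (fun c' => F.e c' ≠ 1)).filter
        (fun c' => F.e c' - 1 = v + 2 ∧ (readBefore c' c ∨ c' = c)) =
        F.cells.filter (fun c' => F.e c' = v + 3 ∧ (readBefore c' c ∨ c' = c)) := by
      rw [Finset.filter_filter]
      apply Finset.filter_congr
      intro x hx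
      have := F.pos x hx
      constructor
      · rintro ⟨h1, h2, h3⟩; exact ⟨by omega, h3⟩
      · rintro ⟨h1, h3⟩; exact ⟨by omega, by omega, h3⟩
    have hs2 : (F.cells.filter (fun c' => F.e c' ≠ 1)).filter
        (fun c' => F.e c' - 1 = v + 1 ∧ readBefore c' c) =
        F.cells.filter (fun c' => F.e c' = v + 2 ∧ readBefore c' c) := by
      rw [Finset.filter_filter]
      apply Finset.filter_congr
      intro x hx
      have := F.pos x hx
      constructor
      · rintro ⟨h1, h2, h3⟩; exact ⟨by omega, h3⟩
      · rintro ⟨h1, h3⟩; exact ⟨by omega, by omega, h3⟩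
    rw [hs1, hs2]
    exact F.lattice c hc1 (v + 1) (by omega)

namespace AbsFill

variable (F : AbsFill)

def ov (k i : ℕ) : ℕ :=
  ((F.cells.image Prod.snd).filter (fun j => ∀ t, t < k → (i + t, j) ∈ F.cells)).card

theorem count_remove1 {v : ℕ} (hv : 1 ≤ v) : F.remove1.count v = F.count (v + 1) := by
  unfold count remove1
  simp only [Finset.filter_filter]
  congr 1
  apply Finset.filter_congr
  intro x hx
  have := F.pos x hx
  constructor
  · rintro ⟨h1, h2⟩; omega
  · intro h1; omega

theorem ov_one (i : ℕ) : F.ov 1 i = (F.cells.filter (fun c => c.1 = i)).card := by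
  rw [ov]
  apply Finset.card_bij' (fun j _ => (i, j)) (fun c _ => c.2)
  · intro j hj
    obtain ⟨_, hj2⟩ := Finset.mem_filter.mp hj
    have := hj2 0 (by omega)
    simpa using this
  · intro c hc
    obtain ⟨hc1, hc2⟩ := Finset.mem_filter.mp hc
    refine Finset.mem_filter.mpr ⟨Finset.mem_image.mpr ⟨c, hc1, rfl⟩, ?_⟩
    intro t ht
    have : t = 0 := by omega
    subst this
    have : (i + 0, c.2) = c := by
      rw [← hc2]; simp
    rw [this]; exact hc1
  · intro j hj; rfl
  · intro c hc
    obtain ⟨hc1, hc2⟩ := Finset.mem_filter.mp hc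
    rw [← hc2]

theorem ov_le_remove1 {k : ℕ} (hk : 2 ≤ k) (i : ℕ) :
    F.ov k i ≤ F.remove1.ov (k - 1) (i + 1) := by
  apply Finset.card_le_card
  intro j hj
  obtain ⟨hj1, hj2⟩ := Finset.mem_filter.mp hj
  have hmem : ∀ t, 1 ≤ t → t < k → (i + t, j) ∈ F.remove1.cells := by
    intro t ht1 ht2
    refine Finset.mem_filter.mpr ⟨hj2 t ht2, ?_⟩
    have h0 : (i, j) ∈ F.cells := by
      have := hj2 0 (by omega); simpa using this
    have := F.col_strict i (i + t) j (by omega) h0 (hj2 t ht2)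
    have := F.pos _ h0
    omega
  refine Finset.mem_filter.mpr ⟨?_, ?_⟩
  · exact Finset.mem_image.mpr ⟨(i + 1, j), hmem 1 (le_refl _) (by omega), rfl⟩
  · intro t ht
    have := hmem (t + 1) (by omega) (by omega)
    have he : (i + 1 + t, j) = (i + (t + 1), j) := by
      rw [show i + 1 + t = i + (t + 1) by omega]
    rw [he]
    exact this

theorem ov_one_split (r : ℕ) :
    F.ov 1 r = (F.cells.filter (fun c => c.1 = r ∧ F.e c = 1)).card + F.remove1.ov 1 r := by
  rw [ov_one, ov_one]
  have h1 : F.remove1.cells.filter (fun c => c.1 = r) =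
      F.cells.filter (fun c => c.1 = r ∧ F.e c ≠ 1) := by
    show (F.cells.filter (fun c => F.e c ≠ 1)).filter (fun c => c.1 = r) = _
    rw [Finset.filter_filter]
    apply Finset.filter_congr
    intro x _
    exact ⟨fun ⟨a, b⟩ => ⟨b, a⟩, fun ⟨a, b⟩ => ⟨b, a⟩⟩
  rw [h1]
  have h2 : F.cells.filter (fun c => c.1 = r ∧ F.e c = 1) =
      (F.cells.filter (fun c => c.1 = r)).filter (fun c => F.e c = 1) := by
    rw [Finset.filter_filter]
  have h3 : F.cells.filter (fun c => c.1 = r ∧ F.e c ≠ 1) =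
      (F.cells.filter (fun c => c.1 = r)).filter (fun c => ¬ (F.e c = 1)) := by
    rw [Finset.filter_filter]
  rw [h2, h3, Finset.card_filter_add_card_filter_not]

end AbsFill

theorem absfill_core : ∀ (n : ℕ) (F : AbsFill), F.cells.card ≤ n → ∀ k, 1 ≤ k →
    ∀ R : Finset ℕ,
      ∑ i ∈ R, F.ov k i ≤ ∑ v ∈ Finset.range R.card, F.count (k + v) := by
  intro n
  induction n with
  | zero =>
    intro F hF k hk R
    have hempty : F.cells = ∅ := Finset.card_eq_zero.mp (le_antisymm hF (Nat.zero_le _))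
    have hz : ∀ j, F.ov k j = 0 := by
      intro j
      rw [AbsFill.ov, hempty]
      simp
    calc ∑ i ∈ R, F.ov k i = 0 := by simp [hz]
      _ ≤ _ := Nat.zero_le _
  | succ n ih =>
    intro F hF k hk R
    rcases Finset.eq_empty_or_nonempty F.cells with hemp | hne
    · have hz : ∀ j, F.ov k j = 0 := by
        intro j; rw [AbsFill.ov, hemp]; simp
      calc ∑ i ∈ R, F.ov k i = 0 := by simp [hz]
        _ ≤ _ := Nat.zero_le _
    · obtain ⟨c1, hc1, he1⟩ := F.exists_one hne
      have hcard' : F.remove1.cells.card ≤ n := by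
        have hss : F.remove1.cells ⊂ F.cells := by
          constructor
          · exact Finset.filter_subset _ _
          · intro hsub
            have := hsub hc1
            have := (Finset.mem_filter.mp this).2
            exact this he1
        have := Finset.card_lt_card hss
        omega
      rcases eq_or_lt_of_le hk with hk1 | hk2
      · -- k = 1
        subst hk1
        rcases Finset.eq_empty_or_nonempty R with hR | hR
        · subst hR; simp
        set r₁ := R.min' hR with hr₁
        have step1 : ∑ i ∈ R, F.ov 1 i =
            (∑ i ∈ R, (F.cells.filter (fun c => c.1 = i ∧ F.e c = 1)).card)
            + ∑ i ∈ R, F.remove1.ov 1 i := by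
          rw [← Finset.sum_add_distrib]
          apply Finset.sum_congr rfl
          intro i _
          exact F.ov_one_split i
        have hM1 : ∑ i ∈ R, (F.cells.filter (fun c => c.1 = i ∧ F.e c = 1)).card =
            (F.cells.filter (fun c => c.1 ∈ R ∧ F.e c = 1)).card := by
          rw [← Finset.card_biUnion]
          · congr 1
            ext c
            simp only [Finset.mem_biUnion, Finset.mem_filter]
            constructor
            · rintro ⟨i, hi, hc, rfl, he⟩; exact ⟨hc, hi, he⟩
            · rintro ⟨hc, hi, he⟩; exact ⟨c.1, hi, hc, rfl, he⟩
          · intro x hx y hy hxy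
            rw [Function.onFun, Finset.disjoint_left]
            intro a ha hb
            exact hxy ((Finset.mem_filter.mp ha).2.1 ▸ (Finset.mem_filter.mp hb).2.1 ▸ rfl)
        have step2 : ∑ i ∈ R, F.remove1.ov 1 i =
            F.remove1.ov 1 r₁ + ∑ i ∈ R.erase r₁, F.remove1.ov 1 i := by
          rw [Finset.add_sum_erase]
          exact R.min'_mem hR
        have hM2eq : F.remove1.ov 1 r₁ =
            (F.cells.filter (fun c => c.1 = r₁ ∧ 2 ≤ F.e c)).card := by
          rw [AbsFill.ov_one]
          congr 1
          show (F.cells.filter (fun c => F.e c ≠ 1)).filter (fun c => c.1 = r₁) = _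
          rw [Finset.filter_filter]
          apply Finset.filter_congr
          intro x hx
          have := F.pos x hx
          constructor
          · rintro ⟨a, b⟩; exact ⟨b, by omega⟩
          · rintro ⟨a, b⟩; exact ⟨by omega, a⟩
        have hclaim := F.claimD R hR
        have hIH := ih F.remove1 hcard' 1 (le_refl _) (R.erase r₁)
        have hcounts : ∀ v, F.remove1.count (1 + v) = F.count (2 + v) := by
          intro v
          rw [F.count_remove1 (by omega)]
          congr 1
          omega
        have hcardR : (R.erase r₁).card = R.card - 1 :=
          Finset.card_erase_of_mem (R.min'_mem hR)
        have hRpos : 1 ≤ R.card := Finset.card_pos.mpr hR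
        have hsum : ∑ v ∈ Finset.range R.card, F.count (1 + v) =
            F.count 1 + ∑ v ∈ Finset.range (R.card - 1), F.count (2 + v) := by
          obtain ⟨m, hm⟩ : ∃ m, R.card = m + 1 := ⟨R.card - 1, by omega⟩
          rw [hm]
          rw [Finset.sum_range_succ']
          simp only [Nat.add_succ_sub_one]
          rw [add_comm]
          congr 1
          apply Finset.sum_congr rfl
          intro v _
          congr 1
          omega
        have h2 : ∑ i ∈ R.erase r₁, F.remove1.ov 1 i ≤
            ∑ v ∈ Finset.range (R.card - 1), F.count (2 + v) := by
          calc ∑ i ∈ R.erase r₁, F.remove1.ov 1 i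
              ≤ ∑ v ∈ Finset.range ((R.erase r₁).card), F.remove1.count (1 + v) := hIH
            _ = ∑ v ∈ Finset.range (R.card - 1), F.count (2 + v) := by
                rw [hcardR]
                exact Finset.sum_congr rfl (fun v _ => hcounts v)
        rw [← hr₁] at hclaim
        rw [← hM2eq] at hclaim
        rw [step1, hM1, step2, hsum]
        omega
      · -- 2 ≤ k
        calc ∑ i ∈ R, F.ov k i
            ≤ ∑ i ∈ R, F.remove1.ov (k - 1) (i + 1) := by
              apply Finset.sum_le_sum
              intro i _
              exact F.ov_le_remove1 hk2 i
          _ = ∑ i' ∈ R.image (· + 1), F.remove1.ov (k - 1) i' := by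
              rw [Finset.sum_image]
              intro x _ y _ h
              simp only at h
              omega
          _ ≤ ∑ v ∈ Finset.range ((R.image (· + 1)).card), F.remove1.count ((k - 1) + v) :=
              ih F.remove1 hcard' (k - 1) (by omega) _
          _ = ∑ v ∈ Finset.range R.card, F.count (k + v) := by
              rw [Finset.card_image_of_injective _ (fun x y h => by omega)]
              apply Finset.sum_congr rfl
              intro v _
              rw [F.count_remove1 (by omega)]
              congr 1
              omega

end Helpers

section SkewGeometry

namespace SkewShape

variable (A : SkewShape)

theorem mem_cells' {c : ℕ × ℕ} : c ∈ A.cells ↔ c ∈ A.outer ∧ c ∉ A.inner := by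
  rw [cells, Finset.mem_sdiff, YoungDiagram.mem_cells, YoungDiagram.mem_cells]

theorem mem_cells_iff_rowLen {i j : ℕ} :
    (i, j) ∈ A.cells ↔ A.inner.rowLen i ≤ j ∧ j < A.outer.rowLen i := by
  rw [mem_cells', YoungDiagram.mem_iff_lt_rowLen, YoungDiagram.mem_iff_lt_rowLen]
  omega

theorem row_lt_numRows {i j : ℕ} (h : (i, j) ∈ A.cells) : i < A.numRows := by
  have := (A.mem_cells'.mp h).1
  have h0 : (i, 0) ∈ A.outer := A.outer.up_left_mem (le_refl _) (Nat.zero_le _) this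
  rw [YoungDiagram.mem_iff_lt_colLen] at h0
  exact h0

theorem col_lt_numCols {i j : ℕ} (h : (i, j) ∈ A.cells) : j < A.numCols := by
  have := (A.mem_cells'.mp h).1
  have h0 : (0, j) ∈ A.outer := A.outer.up_left_mem (Nat.zero_le _) (le_refl _) this
  rw [YoungDiagram.mem_iff_lt_rowLen] at h0
  exact h0

theorem rowLen_le_numCols (i : ℕ) : A.outer.rowLen i ≤ A.numCols :=
  A.outer.rowLen_anti 0 i (Nat.zero_le _)

end SkewShape

/-! ### The trimmed skew shape -/

def trimInner (A : SkewShape) : YoungDiagram where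
  cells := A.outer.cells.filter (fun c => ¬(1 ≤ c.1 ∧ (c.1 - 1, c.2) ∈ A.cells))
  isLowerSet := by
    intro a b hba ha
    rw [Finset.mem_coe, Finset.mem_filter] at ha ⊢
    obtain ⟨ha1, ha2⟩ := ha
    rw [YoungDiagram.mem_cells] at ha1
    have hb1 : b ∈ A.outer := A.outer.isLowerSet hba (by rwa [Finset.mem_coe, YoungDiagram.mem_cells] at *)
    refine ⟨by rwa [YoungDiagram.mem_cells], ?_⟩
    rintro ⟨hb2, hb3⟩
    apply ha2
    obtain ⟨hba1, hba2⟩ := Prod.mk_le_mk.mp (show (b.1, b.2) ≤ (a.1, a.2) from hba)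
    constructor
    · omega
    · rw [SkewShape.mem_cells'] at hb3 ⊢
      constructor
      · exact A.outer.up_left_mem (by omega) (by omega)
          (show (a.1, a.2) ∈ A.outer by simpa using ha1)
      · intro hcon
        exact hb3.2 (A.inner.up_left_mem (by omega) (by omega) hcon)

def trimShape (A : SkewShape) : SkewShape where
  outer := A.outer
  inner := trimInner A
  le := by
    intro c hc
    have := Finset.mem_filter.mp (show c ∈ (trimInner A).cells from hc)
    exact this.1

theorem trimShape_cells (A : SkewShape) : (trimShape A).cells = trimCells A := by
  ext c
  show c ∈ A.outer.cells \ (trimInner A).cells ↔ _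
  rw [trimCells, Finset.mem_sdiff, Finset.mem_filter]
  constructor
  · rintro ⟨h1, h2⟩
    have hP : 1 ≤ c.1 ∧ (c.1 - 1, c.2) ∈ A.cells := by
      by_contra hP
      exact h2 (Finset.mem_filter.mpr ⟨h1, hP⟩)
    refine ⟨?_, hP⟩
    rw [SkewShape.mem_cells']
    refine ⟨by rwa [YoungDiagram.mem_cells] at h1, ?_⟩
    intro hcon
    have h5 := A.mem_cells'.mp hP.2
    exact h5.2 (A.inner.up_left_mem (by omega) (le_refl _)
      (show (c.1, c.2) ∈ A.inner from hcon))
  · rintro ⟨h1, h2, h3⟩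
    have ho : c ∈ A.outer.cells := by
      rw [YoungDiagram.mem_cells]; exact (A.mem_cells'.mp h1).1
    refine ⟨ho, ?_⟩
    intro hmem
    exact (Finset.mem_filter.mp hmem).2 ⟨h2, h3⟩

theorem trimShape_numRows (A : SkewShape) : (trimShape A).numRows = A.numRows := rfl
theorem trimShape_numCols (A : SkewShape) : (trimShape A).numCols = A.numCols := rfl

theorem trimShape_cells_subset (A : SkewShape) : (trimShape A).cells ⊆ A.cells := by
  rw [trimShape_cells, trimCells]
  exact Finset.filter_subset _ _

theorem overlap_trim (A : SkewShape) {k : ℕ} (hk : 2 ≤ k) (i : ℕ) :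
    A.overlap k i = (trimShape A).overlap (k - 1) (i + 1) := by
  rw [SkewShape.overlap, SkewShape.overlap, trimShape_numCols]
  congr 1
  apply Finset.filter_congr
  intro j _
  simp only [trimShape_cells]
  constructor
  · intro h t ht
    rw [trimCells, Finset.mem_filter]
    refine ⟨?_, by omega, ?_⟩
    · have := h (t + 1) (by omega)
      rw [show i + (t + 1) = i + 1 + t by omega] at this
      exact this
    · have := h t (by omega)
      rw [show i + 1 + t - 1 = i + t by omega]
      exact this
  · intro h t ht
    rcases Nat.eq_zero_or_pos t with rfl | htpos
    · have := h 0 (by omega)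
      rw [trimCells, Finset.mem_filter] at this
      have h2 := this.2.2
      rw [show i + 1 + 0 - 1 = i + 0 by omega] at h2
      exact h2
    · have := h (t - 1) (by omega)
      rw [trimCells, Finset.mem_filter] at this
      have := this.1
      rwa [show i + 1 + (t - 1) = i + t by omega] at this

theorem trimShape_overlap_zero (A : SkewShape) {w : ℕ} (hw : 1 ≤ w) :
    (trimShape A).overlap w 0 = 0 := by
  rw [SkewShape.overlap, Finset.card_eq_zero, Finset.filter_eq_empty_iff]
  intro j _ hcon
  have := hcon 0 (by omega)
  rw [trimShape_cells, trimCells, Finset.mem_filter] at this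
  omega

theorem rowsK_trim (A : SkewShape) {k : ℕ} (hk : 2 ≤ k) :
    A.rowsK k = (trimShape A).rowsK (k - 1) := by
  rw [SkewShape.rowsK, SkewShape.rowsK, trimShape_numRows]
  congr 1
  by_cases hkn : k ≤ A.numRows + 1
  · have h1 : A.numRows + 1 - (k - 1) = (A.numRows + 1 - k) + 1 := by omega
    rw [h1, List.range_succ_eq_map]
    rw [List.map_cons, List.filter_cons]
    have h0 : (trimShape A).overlap (k - 1) 0 = 0 := trimShape_overlap_zero A (by omega)
    rw [h0]
    simp only [decide_eq_true_eq]
    rw [if_neg (by omega)]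
    rw [List.map_map]
    congr 1
    apply List.map_congr_left
    intro i _
    exact (overlap_trim A hk i).trans rfl
  · have h1 : A.numRows + 1 - k = 0 := by omega
    have h2 : A.numRows + 1 - (k - 1) ≤ 1 := by omega
    rw [h1]
    rcases Nat.le_one_iff_eq_zero_or_eq_one.mp h2 with h3 | h3
    · rw [h3]; rfl
    · rw [h3]
      have hr1 : List.range 1 = [0] := by simp [List.range_succ]
      rw [hr1]
      simp only [List.map_cons, List.map_nil, List.filter_cons]
      have h0 : (trimShape A).overlap (k - 1) 0 = 0 := trimShape_overlap_zero A (by omega)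
      rw [h0]
      simp

theorem rowsK_iterate_trim : ∀ (j : ℕ) (B : SkewShape) (k : ℕ), 1 ≤ k →
    B.rowsK (k + j) = ((trimShape)^[j] B).rowsK k := by
  intro j
  induction j with
  | zero => intro B k hk; simp
  | succ j ih =>
    intro B k hk
    have h2 : B.rowsK (k + (j + 1)) = ((trimShape)^[j] B).rowsK (k + 1) := by
      rw [show k + (j + 1) = (k + 1) + j by omega]
      exact ih B (k + 1) (by omega)
    rw [h2, Function.iterate_succ_apply']
    have h3 := rowsK_trim ((trimShape)^[j] B) (k := k + 1) (by omega)
    rw [show k + 1 - 1 = k by omega] at h3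
    exact h3

end SkewGeometry


section Canon

namespace SkewShape

variable (D : SkewShape)

theorem mem_of_mem_inner {c : ℕ × ℕ} (h : c ∈ D.inner) : c ∈ D.outer := by
  have h2 : c ∈ D.inner.cells := by rwa [YoungDiagram.mem_cells]
  have h3 := D.le h2
  exact h3

theorem inner_rowLen_le (i : ℕ) : D.inner.rowLen i ≤ D.outer.rowLen i := by
  by_contra h
  push_neg at h
  have h1 : (i, D.outer.rowLen i) ∈ D.inner := by
    rw [YoungDiagram.mem_iff_lt_rowLen]; omega
  have h2 := D.mem_of_mem_inner h1
  rw [YoungDiagram.mem_iff_lt_rowLen] at h2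
  omega

/-- The length of row `i` of the skew shape. -/
def rlen (i : ℕ) : ℕ := D.outer.rowLen i - D.inner.rowLen i

/-- number of rows (among all rows) of length at least `t` -/
def nrows (t : ℕ) : ℕ := ((Finset.range D.numRows).filter (fun i => t ≤ D.rlen i)).card

/-- number of rows above row `i` of length at least `t` -/
def Ncount (i t : ℕ) : ℕ := ((Finset.range i).filter (fun i' => t ≤ D.rlen i')).card

theorem cell_t {i j : ℕ} (h : (i, j) ∈ D.cells) :
    1 ≤ D.outer.rowLen i - j ∧ D.outer.rowLen i - j ≤ D.rlen i := by
  rw [mem_cells_iff_rowLen] at h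
  have := D.inner_rowLen_le i
  unfold rlen
  omega

theorem mem_of_t {i t : ℕ} (h1 : 1 ≤ t) (h2 : t ≤ D.rlen i) :
    (i, D.outer.rowLen i - t) ∈ D.cells ∧
      D.outer.rowLen i - (D.outer.rowLen i - t) = t := by
  have := D.inner_rowLen_le i
  unfold rlen at h2
  rw [mem_cells_iff_rowLen]
  omega

theorem Ncount_anti (i : ℕ) {t1 t2 : ℕ} (ht : t2 ≤ t1) : D.Ncount i t1 ≤ D.Ncount i t2 := by
  apply Finset.card_le_card
  intro x hx
  obtain ⟨h1, h2⟩ := Finset.mem_filter.mp hx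
  exact Finset.mem_filter.mpr ⟨h1, by omega⟩

theorem Ncount_lt {i1 i2 t1 t2 : ℕ} (h12 : i1 < i2) (ht : t2 ≤ t1) (h1 : t1 ≤ D.rlen i1) :
    D.Ncount i1 t1 < D.Ncount i2 t2 := by
  have hsub : insert i1 ((Finset.range i1).filter (fun i' => t1 ≤ D.rlen i')) ⊆
      (Finset.range i2).filter (fun i' => t2 ≤ D.rlen i') := by
    intro x hx
    rcases Finset.mem_insert.mp hx with rfl | hx
    · exact Finset.mem_filter.mpr ⟨Finset.mem_range.mpr h12, by omega⟩
    · obtain ⟨hx1, hx2⟩ := Finset.mem_filter.mp hx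
      rw [Finset.mem_range] at hx1
      exact Finset.mem_filter.mpr ⟨Finset.mem_range.mpr (by omega), by omega⟩
  have hni : i1 ∉ (Finset.range i1).filter (fun i' => t1 ≤ D.rlen i') := by
    intro h; exact absurd (Finset.mem_range.mp (Finset.mem_filter.mp h).1) (lt_irrefl _)
  have := Finset.card_le_card hsub
  rw [Finset.card_insert_of_notMem hni] at this
  unfold Ncount
  omega

theorem Ncount_split {i t : ℕ}
    (hne : ((Finset.range i).filter (fun i' => t ≤ D.rlen i')).Nonempty) :
    (((Finset.range i).filter (fun i' => t ≤ D.rlen i')).max' hne < i ∧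
      t ≤ D.rlen (((Finset.range i).filter (fun i' => t ≤ D.rlen i')).max' hne)) ∧
    D.Ncount i t =
      D.Ncount (((Finset.range i).filter (fun i' => t ≤ D.rlen i')).max' hne) t + 1 := by
  set g := ((Finset.range i).filter (fun i' => t ≤ D.rlen i')).max' hne with hg
  have hgmem := Finset.max'_mem _ hne
  obtain ⟨hg1, hg2⟩ := Finset.mem_filter.mp hgmem
  rw [Finset.mem_range] at hg1
  refine ⟨⟨hg1, hg2⟩, ?_⟩
  have hset : (Finset.range i).filter (fun i' => t ≤ D.rlen i') =
      insert g ((Finset.range g).filter (fun i' => t ≤ D.rlen i')) := by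
    ext x
    simp only [Finset.mem_insert, Finset.mem_filter, Finset.mem_range]
    constructor
    · rintro ⟨hx1, hx2⟩
      have hle : x ≤ g := Finset.le_max' ((Finset.range i).filter (fun i' => t ≤ D.rlen i')) x
        (Finset.mem_filter.mpr ⟨Finset.mem_range.mpr hx1, hx2⟩)
      rcases eq_or_lt_of_le hle with rfl | hlt
      · exact Or.inl rfl
      · exact Or.inr ⟨hlt, hx2⟩
    · rintro (rfl | ⟨hx1, hx2⟩)
      · exact ⟨hg1, hg2⟩
      · exact ⟨by omega, hx2⟩
  have hni : g ∉ (Finset.range g).filter (fun i' => t ≤ D.rlen i') := by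
    intro h; exact absurd (Finset.mem_range.mp (Finset.mem_filter.mp h).1) (lt_irrefl _)
  unfold Ncount
  rw [hset, Finset.card_insert_of_notMem hni]

/-- The canonical filling of a skew shape `D`, witnessing `rows₁(D) ∈ supp(D)`. -/
noncomputable def canon : SkewSsyt D where
  entry := fun i j =>
    if (i, j) ∈ D.cells then D.Ncount i (D.outer.rowLen i - j) + 1 else 0
  pos := by
    intro i j h
    rw [if_pos h]
    omega
  zeros := by
    intro i j h
    rw [if_neg h]
  row_weak := by
    intro i j1 j2 hj h1 h2
    rw [if_pos h1, if_pos h2]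
    have := D.Ncount_anti i (t1 := D.outer.rowLen i - j1) (t2 := D.outer.rowLen i - j2)
      (by omega)
    omega
  col_strict := by
    intro i1 i2 j hi h1 h2
    rw [if_pos h1, if_pos h2]
    have hanti := D.outer.rowLen_anti i1 i2 (le_of_lt hi)
    have hc1 := D.cell_t h1
    have := D.Ncount_lt (t1 := D.outer.rowLen i1 - j) (t2 := D.outer.rowLen i2 - j) hi
      (by omega) (by omega)
    omega

theorem canon_entry {i j : ℕ} (h : (i, j) ∈ D.cells) :
    (D.canon).entry i j = D.Ncount i (D.outer.rowLen i - j) + 1 := by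
  rw [canon]
  exact if_pos h

noncomputable def back (b : ℕ × ℕ) : ℕ × ℕ :=
  if hne : ((Finset.range b.1).filter
      (fun i' => (D.outer.rowLen b.1 - b.2) ≤ D.rlen i')).Nonempty then
    ((((Finset.range b.1).filter
        (fun i' => (D.outer.rowLen b.1 - b.2) ≤ D.rlen i')).max' hne),
      D.outer.rowLen ((((Finset.range b.1).filter
        (fun i' => (D.outer.rowLen b.1 - b.2) ≤ D.rlen i')).max' hne))
        - (D.outer.rowLen b.1 - b.2))
  else b

theorem back_spec {b : ℕ × ℕ} {v : ℕ} (hb : b ∈ D.cells)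
    (he : D.Ncount b.1 (D.outer.rowLen b.1 - b.2) = v + 1) :
    D.back b ∈ D.cells ∧
      D.Ncount (D.back b).1 (D.outer.rowLen (D.back b).1 - (D.back b).2) = v ∧
      (D.back b).1 < b.1 ∧
      D.outer.rowLen (D.back b).1 - (D.back b).2 = D.outer.rowLen b.1 - b.2 ∧
      (∀ x, x < b.1 → (D.outer.rowLen b.1 - b.2) ≤ D.rlen x → x ≤ (D.back b).1) := by
  have hb' : (b.1, b.2) ∈ D.cells := hb
  have hne : ((Finset.range b.1).filter
      (fun i' => (D.outer.rowLen b.1 - b.2) ≤ D.rlen i')).Nonempty := by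
    rw [← Finset.card_pos]
    unfold Ncount at he
    omega
  obtain ⟨⟨hg1, hg2⟩, hg3⟩ := D.Ncount_split hne
  have ht := D.cell_t hb'
  have hmem := D.mem_of_t (i := ((Finset.range b.1).filter
      (fun i' => (D.outer.rowLen b.1 - b.2) ≤ D.rlen i')).max' hne)
      (t := D.outer.rowLen b.1 - b.2) (by omega) hg2
  have hback : D.back b = (((Finset.range b.1).filter
      (fun i' => (D.outer.rowLen b.1 - b.2) ≤ D.rlen i')).max' hne,
      D.outer.rowLen (((Finset.range b.1).filter
        (fun i' => (D.outer.rowLen b.1 - b.2) ≤ D.rlen i')).max' hne)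
        - (D.outer.rowLen b.1 - b.2)) := by
    rw [back, dif_pos hne]
  rw [hback]
  dsimp only
  refine ⟨hmem.1, ?_, hg1, hmem.2, ?_⟩
  · rw [hmem.2]
    omega
  · intro x hx1 hx2
    exact Finset.le_max' ((Finset.range b.1).filter
      (fun i' => (D.outer.rowLen b.1 - b.2) ≤ D.rlen i')) x
      (Finset.mem_filter.mpr ⟨Finset.mem_range.mpr hx1, hx2⟩)

theorem back_inj {b1 b2 : ℕ × ℕ} {v : ℕ} (hb1 : b1 ∈ D.cells) (hb2 : b2 ∈ D.cells)
    (he1 : D.Ncount b1.1 (D.outer.rowLen b1.1 - b1.2) = v + 1)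
    (he2 : D.Ncount b2.1 (D.outer.rowLen b2.1 - b2.2) = v + 1)
    (hbk : D.back b1 = D.back b2) : b1 = b2 := by
  obtain ⟨_, _, hr1, ht1, hm1⟩ := D.back_spec hb1 he1
  obtain ⟨_, _, hr2, ht2, hm2⟩ := D.back_spec hb2 he2
  have hteq : D.outer.rowLen b1.1 - b1.2 = D.outer.rowLen b2.1 - b2.2 := by
    rw [← ht1, ← ht2, hbk]
  have hc1 := D.cell_t (show (b1.1, b1.2) ∈ D.cells from hb1)
  have hc2 := D.cell_t (show (b2.1, b2.2) ∈ D.cells from hb2)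
  have hfst : b1.1 = b2.1 := by
    rcases lt_trichotomy b1.1 b2.1 with hlt | he | hlt
    · exfalso
      have := hm2 b1.1 hlt (by omega)
      rw [← hbk] at this
      omega
    · exact he
    · exfalso
      have := hm1 b2.1 hlt (by omega)
      rw [hbk] at this
      omega
  have hb1m := (D.mem_cells_iff_rowLen).mp (show (b1.1, b1.2) ∈ D.cells from hb1)
  have hb2m := (D.mem_cells_iff_rowLen).mp (show (b2.1, b2.2) ∈ D.cells from hb2)
  have hsnd : b1.2 = b2.2 := by
    rw [hfst] at hteq hb1m
    omega
  exact Prod.ext hfst hsnd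

theorem canon_isLR : IsLR (D.canon) := by
  intro c hc v hv
  have hcc : (c.1, c.2) ∈ D.cells := hc
  have hN : D.Ncount c.1 (D.outer.rowLen c.1 - c.2) = v + 1 := by
    have := D.canon_entry hcc
    rw [this] at hv
    omega
  apply Finset.card_le_card_of_injOn D.back
  · intro b hbm
    obtain ⟨hb, hbe, hbb⟩ := Finset.mem_filter.mp hbm
    have hbN : D.Ncount b.1 (D.outer.rowLen b.1 - b.2) = v + 1 := by
      have := D.canon_entry (show (b.1, b.2) ∈ D.cells from hb)
      rw [this] at hbe
      omega
    obtain ⟨hm, hNv, hrow, _, _⟩ := D.back_spec hb hbN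
    refine Finset.mem_filter.mpr ⟨hm, ?_, ?_⟩
    · have := D.canon_entry (show ((D.back b).1, (D.back b).2) ∈ D.cells from hm)
      rw [this, hNv]
    · left
      have hble : b.1 ≤ c.1 := by
        rcases hbb with hb' | rfl
        · rcases hb' with h | ⟨h, _⟩ <;> omega
        · exact le_refl _
      omega
  · intro a ha b hb hab
    rw [Finset.mem_coe, Finset.mem_filter] at ha hb
    have haN : D.Ncount a.1 (D.outer.rowLen a.1 - a.2) = v + 1 := by
      have := D.canon_entry (show (a.1, a.2) ∈ D.cells from ha.1)
      have h2 := ha.2.1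
      rw [this] at h2
      omega
    have hbN : D.Ncount b.1 (D.outer.rowLen b.1 - b.2) = v + 1 := by
      have := D.canon_entry (show (b.1, b.2) ∈ D.cells from hb.1)
      have h2 := hb.2.1
      rw [this] at h2
      omega
    exact D.back_inj ha.1 hb.1 haN hbN hab

end SkewShape

end Canon


section CanonContent

theorem card_filter_range_eq_countP (n : ℕ) (p : ℕ → Prop) [DecidablePred p] :
    ((Finset.range n).filter p).card = (List.range n).countP (fun i => decide (p i)) := by
  induction n with
  | zero => simp
  | succ n ih =>
    rw [Finset.range_add_one, List.range_succ, Finset.filter_insert, List.countP_append]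
    by_cases h : p n
    · rw [if_pos h, Finset.card_insert_of_notMem (by simp), ih]
      simp [h]
    · rw [if_neg h, ih]
      simp [h]

namespace SkewShape

variable (D : SkewShape)

theorem overlap_one_eq_rlen (i : ℕ) : D.overlap 1 i = D.rlen i := by
  rw [SkewShape.overlap]
  rw [show D.rlen i = (Finset.Ico (D.inner.rowLen i) (D.outer.rowLen i)).card by
    rw [Nat.card_Ico]; rfl]
  congr 1
  ext j
  simp only [Finset.mem_filter, Finset.mem_range, Finset.mem_Ico]
  constructor
  · rintro ⟨h1, h2⟩
    have h3 := h2 0 (by omega)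
    rw [show i + 0 = i by omega] at h3
    exact (D.mem_cells_iff_rowLen).mp h3
  · rintro ⟨h1, h2⟩
    have hm : (i, j) ∈ D.cells := (D.mem_cells_iff_rowLen).mpr ⟨h1, h2⟩
    refine ⟨lt_of_lt_of_le h2 (D.rowLen_le_numCols i), ?_⟩
    intro t ht
    have ht0 : t = 0 := by omega
    subst ht0
    rw [show i + 0 = i by omega]
    exact hm

theorem overlap_le_numCols (k i : ℕ) : D.overlap k i ≤ D.numCols := by
  rw [SkewShape.overlap]
  calc _ ≤ (Finset.range D.numCols).card := Finset.card_le_card (Finset.filter_subset _ _)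
    _ = D.numCols := Finset.card_range _

theorem rowsK_one_countP (t : ℕ) :
    (D.rowsK 1).countP (fun x => t + 1 ≤ x) = D.nrows (t + 1) := by
  rw [SkewShape.rowsK]
  rw [List.Perm.countP_eq _ (sortDesc_perm _)]
  rw [List.countP_filter]
  have hfun : (fun x : ℕ => decide (t + 1 ≤ x) && decide (0 < x))
      = (fun x : ℕ => decide (t + 1 ≤ x)) := by
    funext x
    by_cases h : t + 1 ≤ x
    · simp [h]
      omega
    · simp [h]
  rw [hfun, List.countP_map]
  rw [show D.numRows + 1 - 1 = D.numRows by omega]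
  rw [nrows, card_filter_range_eq_countP]
  apply List.countP_congr
  intro i _
  simp only [Function.comp]
  constructor
  · intro h
    simp only [decide_eq_true_eq] at h ⊢
    rwa [← D.overlap_one_eq_rlen i]
  · intro h
    simp only [decide_eq_true_eq] at h ⊢
    rwa [D.overlap_one_eq_rlen i]

theorem rowsK_one_le_numCols {x : ℕ} (hx : x ∈ D.rowsK 1) : x ≤ D.numCols := by
  have hx2 : x ∈ (List.range (D.numRows + 1 - 1)).map (D.overlap 1) := by
    have := (sortDesc_perm _).mem_iff.mp hx
    exact List.mem_of_mem_filter this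
  obtain ⟨i, _, rfl⟩ := List.mem_map.mp hx2
  exact D.overlap_le_numCols 1 i

theorem canon_hasContent : HasContent (D.canon) (D.rowsK 1) := by
  intro v
  have hsorted : List.Pairwise (· ≥ ·) (D.rowsK 1) := by
    rw [SkewShape.rowsK]; exact sortDesc_sorted _
  have hB : (D.rowsK 1).getD v 0 = ((Finset.range D.numCols).filter
      (fun t => v + 1 ≤ D.nrows (t + 1))).card := by
    rw [sorted_getD_eq_card hsorted (fun x hx => D.rowsK_one_le_numCols hx) v]
    congr 1
    apply Finset.filter_congr
    intro t _
    rw [D.rowsK_one_countP t]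
  rw [contentCount, hB]
  apply Finset.card_bij (fun c _ => D.outer.rowLen c.1 - c.2 - 1)
  · intro c hcm
    obtain ⟨hc, he⟩ := Finset.mem_filter.mp hcm
    have hcc : (c.1, c.2) ∈ D.cells := hc
    have hct := D.cell_t hcc
    have hN : D.Ncount c.1 (D.outer.rowLen c.1 - c.2) = v := by
      have := D.canon_entry hcc
      rw [this] at he
      omega
    have hrowlt : c.1 < D.numRows := D.row_lt_numRows hcc
    have hle : D.outer.rowLen c.1 ≤ D.numCols := D.rowLen_le_numCols c.1
    refine Finset.mem_filter.mpr ⟨Finset.mem_range.mpr (by omega), ?_⟩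
    have hsub : insert c.1 ((Finset.range c.1).filter
        (fun i' => (D.outer.rowLen c.1 - c.2) ≤ D.rlen i')) ⊆
        (Finset.range D.numRows).filter
          (fun i => (D.outer.rowLen c.1 - c.2) ≤ D.rlen i) := by
      intro x hx
      rcases Finset.mem_insert.mp hx with rfl | hx
      · exact Finset.mem_filter.mpr ⟨Finset.mem_range.mpr hrowlt, hct.2⟩
      · obtain ⟨hx1, hx2⟩ := Finset.mem_filter.mp hx
        rw [Finset.mem_range] at hx1
        exact Finset.mem_filter.mpr ⟨Finset.mem_range.mpr (by omega), hx2⟩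
    have hni : c.1 ∉ (Finset.range c.1).filter
        (fun i' => (D.outer.rowLen c.1 - c.2) ≤ D.rlen i') := by
      intro h; exact absurd (Finset.mem_range.mp (Finset.mem_filter.mp h).1) (lt_irrefl _)
    have hcard := Finset.card_le_card hsub
    rw [Finset.card_insert_of_notMem hni] at hcard
    have : D.Ncount c.1 (D.outer.rowLen c.1 - c.2) + 1 ≤
        D.nrows (D.outer.rowLen c.1 - c.2) := hcard
    rw [show D.outer.rowLen c.1 - c.2 - 1 + 1 = D.outer.rowLen c.1 - c.2 by omega]
    omega
  · intro a ha b hb hab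
    obtain ⟨haC, hae⟩ := Finset.mem_filter.mp ha
    obtain ⟨hbC, hbe⟩ := Finset.mem_filter.mp hb
    have haT := D.cell_t (show (a.1, a.2) ∈ D.cells from haC)
    have hbT := D.cell_t (show (b.1, b.2) ∈ D.cells from hbC)
    have hteq : D.outer.rowLen a.1 - a.2 = D.outer.rowLen b.1 - b.2 := by omega
    have haN : D.Ncount a.1 (D.outer.rowLen a.1 - a.2) = v := by
      have := D.canon_entry (show (a.1, a.2) ∈ D.cells from haC)
      rw [this] at hae; omega
    have hbN : D.Ncount b.1 (D.outer.rowLen b.1 - b.2) = v := by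
      have := D.canon_entry (show (b.1, b.2) ∈ D.cells from hbC)
      rw [this] at hbe; omega
    have hfst : a.1 = b.1 := by
      rcases lt_trichotomy a.1 b.1 with hlt | he | hlt
      · exfalso
        have := D.Ncount_lt (t1 := D.outer.rowLen a.1 - a.2)
          (t2 := D.outer.rowLen b.1 - b.2) hlt (by omega) (by omega)
        omega
      · exact he
      · exfalso
        have := D.Ncount_lt (t1 := D.outer.rowLen b.1 - b.2)
          (t2 := D.outer.rowLen a.1 - a.2) hlt (by omega) (by omega)
        omega
    have hb1 := (D.mem_cells_iff_rowLen).mp (show (a.1, a.2) ∈ D.cells from haC)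
    have hb2 := (D.mem_cells_iff_rowLen).mp (show (b.1, b.2) ∈ D.cells from hbC)
    refine Prod.ext hfst ?_
    rw [hfst] at hteq hb1
    omega
  · intro t' ht'
    obtain ⟨ht1, ht2⟩ := Finset.mem_filter.mp ht'
    rw [Finset.mem_range] at ht1
    obtain ⟨y, hy1, hy2, hy3⟩ := exists_kth ((Finset.range D.numRows).filter
      (fun i => (t' + 1) ≤ D.rlen i)) (v + 1) (by omega) ht2
    obtain ⟨hyr, hyl⟩ := Finset.mem_filter.mp hy1
    rw [Finset.mem_range] at hyr
    have hmem := D.mem_of_t (i := y) (t := t' + 1) (by omega) hyl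
    have hNy : D.Ncount y (t' + 1) = v := by
      have hseteq : (Finset.range y).filter (fun i' => (t' + 1) ≤ D.rlen i') =
          ((Finset.range D.numRows).filter (fun i => (t' + 1) ≤ D.rlen i)).filter
            (fun z => z < y) := by
        ext x
        simp only [Finset.mem_filter, Finset.mem_range]
        constructor
        · rintro ⟨hx1, hx2⟩; exact ⟨⟨by omega, hx2⟩, hx1⟩
        · rintro ⟨⟨_, hx2⟩, hx1⟩; exact ⟨hx1, hx2⟩
      rw [Ncount, hseteq, hy3]
      omega
    refine ⟨(y, D.outer.rowLen y - (t' + 1)), ?_, ?_⟩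
    · refine Finset.mem_filter.mpr ⟨hmem.1, ?_⟩
      have := D.canon_entry hmem.1
      rw [this]
      rw [hmem.2, hNy]
    · dsimp only
      rw [hmem.2]
      omega

end SkewShape

end CanonContent


section Lift

namespace SkewShape

variable (S : SkewShape)

theorem mem_cells_iff_colLen {i j : ℕ} :
    (i, j) ∈ S.cells ↔ S.inner.colLen j ≤ i ∧ i < S.outer.colLen j := by
  rw [mem_cells', YoungDiagram.mem_iff_lt_colLen, YoungDiagram.mem_iff_lt_colLen]
  omega

/-- extension of a trim cell to the right within a row is a trim cell -/
theorem trim_right {i j1 j2 : ℕ} (hj : j1 < j2) (h1 : (i, j1) ∈ (trimShape S).cells)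
    (h2 : (i, j2) ∈ S.cells) : (i, j2) ∈ (trimShape S).cells := by
  rw [trimShape_cells, trimCells, Finset.mem_filter] at h1 ⊢
  obtain ⟨h1c, h1a, h1b⟩ := h1
  refine ⟨h2, h1a, ?_⟩
  rw [SkewShape.mem_cells'] at h1b ⊢
  dsimp only at h1b ⊢
  constructor
  · have h2o := (S.mem_cells'.mp h2).1
    exact S.outer.up_left_mem (by omega) (le_refl _) h2o
  · intro hcon
    exact h1b.2 (S.inner.up_left_mem (le_refl _) (by omega) hcon)

/-- a cell strictly below another cell in its column is a trim cell -/
theorem trim_below {i1 i2 j : ℕ} (hi : i1 < i2) (h1 : (i1, j) ∈ S.cells)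
    (h2 : (i2, j) ∈ S.cells) : (i2, j) ∈ (trimShape S).cells := by
  rw [trimShape_cells, trimCells, Finset.mem_filter]
  refine ⟨h2, by omega, ?_⟩
  rw [mem_cells_iff_colLen] at h1 h2 ⊢
  dsimp only at h1 h2 ⊢
  omega

theorem trim_up {c : ℕ × ℕ} (h : c ∈ (trimShape S).cells) :
    1 ≤ c.1 ∧ (c.1 - 1, c.2) ∈ S.cells := by
  rw [trimShape_cells, trimCells, Finset.mem_filter] at h
  exact h.2

/-- The number of columns of a skew shape, i.e. the number of top boxes. -/
def tops : ℕ := (S.cells.filter (fun c => ¬(1 ≤ c.1 ∧ (c.1 - 1, c.2) ∈ S.cells))).card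

/-- Extend an SSYT on the trimmed shape by filling all the top boxes with 1's. -/
noncomputable def liftFill (T' : SkewSsyt (trimShape S)) : SkewSsyt S where
  entry := fun i j => if (i, j) ∈ S.cells then
    (if (i, j) ∈ (trimShape S).cells then T'.entry i j + 1 else 1) else 0
  pos := by
    intro i j h
    rw [if_pos h]
    split <;> omega
  zeros := by
    intro i j h
    rw [if_neg h]
  row_weak := by
    intro i j1 j2 hj h1 h2
    rw [if_pos h1, if_pos h2]
    by_cases ht1 : (i, j1) ∈ (trimShape S).cells
    · have ht2 : (i, j2) ∈ (trimShape S).cells := by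
        rcases eq_or_lt_of_le hj with rfl | hjlt
        · exact ht1
        · exact S.trim_right hjlt ht1 h2
      rw [if_pos ht1, if_pos ht2]
      have := T'.row_weak i j1 j2 hj ht1 ht2
      omega
    · rw [if_neg ht1]
      by_cases ht2 : (i, j2) ∈ (trimShape S).cells
      · rw [if_pos ht2]
        have := T'.pos i j2 ht2
        omega
      · rw [if_neg ht2]
  col_strict := by
    intro i1 i2 j hi h1 h2
    rw [if_pos h1, if_pos h2]
    have ht2 : (i2, j) ∈ (trimShape S).cells := S.trim_below hi h1 h2
    rw [if_pos ht2]
    by_cases ht1 : (i1, j) ∈ (trimShape S).cells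
    · rw [if_pos ht1]
      have := T'.col_strict i1 i2 j hi ht1 ht2
      omega
    · rw [if_neg ht1]
      have := T'.pos i2 j ht2
      omega

theorem liftFill_entry_top {T' : SkewSsyt (trimShape S)} {c : ℕ × ℕ} (h : c ∈ S.cells)
    (hnt : c ∉ (trimShape S).cells) : (S.liftFill T').entry c.1 c.2 = 1 := by
  show (if (c.1, c.2) ∈ S.cells then _ else _) = 1
  rw [if_pos h, if_neg (by simpa using hnt)]

theorem liftFill_entry_trim {T' : SkewSsyt (trimShape S)} {c : ℕ × ℕ}
    (ht : c ∈ (trimShape S).cells) :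
    (S.liftFill T').entry c.1 c.2 = T'.entry c.1 c.2 + 1 := by
  have h : c ∈ S.cells := trimShape_cells_subset S ht
  show (if (c.1, c.2) ∈ S.cells then _ else _) = _
  rw [if_pos h, if_pos (by simpa using ht)]

theorem liftFill_entry_cases {T' : SkewSsyt (trimShape S)} {c : ℕ × ℕ} (h : c ∈ S.cells) :
    ((S.liftFill T').entry c.1 c.2 = 1 ∧ c ∉ (trimShape S).cells) ∨
      (c ∈ (trimShape S).cells ∧
        (S.liftFill T').entry c.1 c.2 = T'.entry c.1 c.2 + 1) := by
  by_cases ht : c ∈ (trimShape S).cells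
  · exact Or.inr ⟨ht, S.liftFill_entry_trim ht⟩
  · exact Or.inl ⟨S.liftFill_entry_top h ht, ht⟩

theorem liftFill_filter_eq {T' : SkewSsyt (trimShape S)} (w : ℕ) (P : ℕ × ℕ → Prop)
    [DecidablePred P] :
    S.cells.filter (fun c => (S.liftFill T').entry c.1 c.2 = w + 2 ∧ P c) =
      (trimShape S).cells.filter (fun c => T'.entry c.1 c.2 = w + 1 ∧ P c) := by
  ext c
  simp only [Finset.mem_filter]
  constructor
  · rintro ⟨hc, he, hP⟩
    rcases S.liftFill_entry_cases (T' := T') hc with ⟨h1, _⟩ | ⟨ht, h2⟩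
    · omega
    · exact ⟨ht, by omega, hP⟩
  · rintro ⟨hc, he, hP⟩
    have hcc : c ∈ S.cells := trimShape_cells_subset S hc
    refine ⟨hcc, ?_, hP⟩
    rw [S.liftFill_entry_trim hc, he]

theorem liftFill_isLR {T' : SkewSsyt (trimShape S)} (hT' : IsLR T') :
    IsLR (S.liftFill T') := by
  intro c hc v hv
  match v with
  | 0 =>
    apply Finset.card_le_card_of_injOn (fun c' => (c'.1 - 1, c'.2))
    · intro b hbm
      obtain ⟨hb, hbe, hbb⟩ := Finset.mem_filter.mp hbm
      have hbt : b ∈ (trimShape S).cells := by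
        rcases S.liftFill_entry_cases (T' := T') hb with ⟨h1, _⟩ | ⟨ht, _⟩
        · omega
        · exact ht
      obtain ⟨hb1, hbup⟩ := S.trim_up hbt
      refine Finset.mem_filter.mpr ⟨hbup, ?_, ?_⟩
      · -- entry of the box above is 1
        by_cases htt : ((b.1 - 1, b.2) : ℕ × ℕ) ∈ (trimShape S).cells
        · exfalso
          have h2 := (S.liftFill T').col_strict (b.1 - 1) b.1 b.2 (by omega) hbup
            (show (b.1, b.2) ∈ S.cells from hb)
          have h3 := S.liftFill_entry_trim (T' := T') htt
          have h4 := T'.pos _ _ htt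
          dsimp only at h3
          omega
        · exact S.liftFill_entry_top hbup htt
      · -- reading order
        have hble : b.1 ≤ c.1 := by
          rcases hbb with hb' | rfl
          · rcases hb' with h | ⟨h, _⟩ <;> omega
          · exact le_refl _
        left
        dsimp only
        omega
    · intro a ha b hb hab
      rw [Finset.mem_coe, Finset.mem_filter] at ha hb
      have ha1 : a ∈ (trimShape S).cells := by
        rcases S.liftFill_entry_cases (T' := T') ha.1 with ⟨h1, _⟩ | ⟨ht, _⟩
        · have := ha.2.1; omega
        · exact ht
      have hb1 : b ∈ (trimShape S).cells := by
        rcases S.liftFill_entry_cases (T' := T') hb.1 with ⟨h1, _⟩ | ⟨ht, _⟩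
        · have := hb.2.1; omega
        · exact ht
      have haa := (S.trim_up ha1).1
      have hbb := (S.trim_up hb1).1
      have hab' : ((a.1 - 1, a.2) : ℕ × ℕ) = (b.1 - 1, b.2) := hab
      rw [Prod.mk.injEq] at hab'
      obtain ⟨h1, h2⟩ := hab'
      exact Prod.ext (by omega) h2
  | v + 1 =>
    have hct : c ∈ (trimShape S).cells := by
      rcases S.liftFill_entry_cases (T' := T') hc with ⟨h1, _⟩ | ⟨ht, _⟩
      · omega
      · exact ht
    have hT'c : T'.entry c.1 c.2 = v + 2 := by
      have := S.liftFill_entry_trim (T' := T') hct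
      omega
    have h1 := S.liftFill_filter_eq (T' := T') (v + 1)
      (fun c' => readBefore c' c ∨ c' = c)
    have h2 := S.liftFill_filter_eq (T' := T') v (fun c' => readBefore c' c)
    rw [show v + 1 + 2 = (v + 1) + 2 by omega] at *
    rw [h1, h2]
    exact hT' c hct v hT'c

end SkewShape

end Lift


section Lift2

theorem sorted_mem_le_getD0 {l : List ℕ} (hl : List.Pairwise (· ≥ ·) l) {x : ℕ} (hx : x ∈ l) :
    x ≤ l.getD 0 0 := by
  match l with
  | [] => exact absurd hx List.not_mem_nil
  | a :: t =>
    rw [List.getD_cons_zero]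
    rcases List.mem_cons.mp hx with rfl | hx
    · exact le_refl _
    · exact List.rel_of_pairwise_cons hl hx

namespace SkewShape

variable (S : SkewShape)

theorem liftFill_count_one (T' : SkewSsyt (trimShape S)) :
    contentCount (S.liftFill T') 1 = S.tops := by
  unfold contentCount tops
  congr 1
  ext c
  simp only [Finset.mem_filter]
  constructor
  · rintro ⟨hc, he⟩
    refine ⟨hc, ?_⟩
    intro hcond
    have hct : c ∈ (trimShape S).cells := by
      rw [trimShape_cells, trimCells, Finset.mem_filter]
      exact ⟨hc, hcond⟩
    rw [S.liftFill_entry_trim hct] at he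
    have := T'.pos c.1 c.2 hct
    omega
  · rintro ⟨hc, hcond⟩
    refine ⟨hc, ?_⟩
    have hnt : c ∉ (trimShape S).cells := by
      rw [trimShape_cells, trimCells, Finset.mem_filter]
      rintro ⟨_, h2⟩
      exact hcond h2
    exact S.liftFill_entry_top hc hnt

theorem liftFill_count_succ (T' : SkewSsyt (trimShape S)) (w : ℕ) :
    contentCount (S.liftFill T') (w + 2) = contentCount T' (w + 1) := by
  unfold contentCount
  congr 1
  ext c
  simp only [Finset.mem_filter]
  constructor
  · rintro ⟨hc, he⟩
    rcases S.liftFill_entry_cases (T' := T') hc with ⟨h1, _⟩ | ⟨ht, h2⟩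
    · omega
    · exact ⟨ht, by omega⟩
  · rintro ⟨hc, he⟩
    have hcc : c ∈ S.cells := trimShape_cells_subset S hc
    refine ⟨hcc, ?_⟩
    rw [S.liftFill_entry_trim hc, he]

theorem liftFill_content {T' : SkewSsyt (trimShape S)} {ρ : List ℕ}
    (hcont : HasContent T' ρ) : HasContent (S.liftFill T') (S.tops :: ρ) := by
  intro v
  match v with
  | 0 =>
    rw [S.liftFill_count_one T', List.getD_cons_zero]
  | v + 1 =>
    rw [show v + 1 + 1 = v + 2 by omega, S.liftFill_count_succ T' v, List.getD_cons_succ]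
    exact hcont v

theorem count_one_le_tops (T' : SkewSsyt (trimShape S)) : contentCount T' 1 ≤ S.tops := by
  unfold contentCount tops
  apply Finset.card_le_card_of_injOn (fun c => (S.inner.colLen c.2, c.2))
  · intro b hbm
    obtain ⟨hbt, hbe⟩ := Finset.mem_filter.mp hbm
    have hbc : (b.1, b.2) ∈ S.cells := trimShape_cells_subset S hbt
    rw [mem_cells_iff_colLen] at hbc
    refine Finset.mem_filter.mpr ⟨?_, ?_⟩
    · rw [mem_cells_iff_colLen]
      omega
    · dsimp only
      rintro ⟨h1, h2⟩
      rw [mem_cells_iff_colLen] at h2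
      omega
  · intro a ha b hb hab
    rw [Finset.mem_coe, Finset.mem_filter] at ha hb
    have hab' : ((S.inner.colLen a.2, a.2) : ℕ × ℕ) = (S.inner.colLen b.2, b.2) := hab
    rw [Prod.mk.injEq] at hab'
    obtain ⟨_, h2⟩ := hab'
    have hfst : a.1 = b.1 := by
      rcases lt_trichotomy a.1 b.1 with hlt | he | hlt
      · exfalso
        have hc := T'.col_strict a.1 b.1 a.2 hlt
          (show (a.1, a.2) ∈ (trimShape S).cells from ha.1)
          (by rw [h2]; exact hb.1)
        have he1 : T'.entry a.1 a.2 = 1 := ha.2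
        have he2 : T'.entry b.1 b.2 = 1 := hb.2
        rw [← h2] at he2
        omega
      · exact he
      · exfalso
        have hc := T'.col_strict b.1 a.1 b.2 hlt
          (show (b.1, b.2) ∈ (trimShape S).cells from hb.1)
          (by rw [← h2]; exact ha.1)
        have he1 : T'.entry a.1 a.2 = 1 := ha.2
        have he2 : T'.entry b.1 b.2 = 1 := hb.2
        rw [h2] at he1
        omega
    exact Prod.ext hfst h2

theorem liftFill_sorted {T' : SkewSsyt (trimShape S)} {ρ : List ℕ}
    (hρ : ρ.Pairwise (· ≥ ·)) (hcont : HasContent T' ρ) :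
    (S.tops :: ρ).Pairwise (· ≥ ·) := by
  rw [List.pairwise_cons]
  refine ⟨?_, hρ⟩
  intro b hb
  have hb0 : b ≤ ρ.getD 0 0 := sorted_mem_le_getD0 hρ hb
  have h1 : ρ.getD 0 0 = contentCount T' 1 := (hcont 0).symm
  have h2 := S.count_one_le_tops T'
  omega

end SkewShape

/-- The tower of liftings: an LR filling of `B` whose content tail from position `j`
agrees with `rows₁` of the `j`-fold trim. -/
theorem exists_lr_tower : ∀ (j : ℕ) (B : SkewShape), ∃ ν : List ℕ,
    ν.Pairwise (· ≥ ·) ∧ (∃ T : SkewSsyt B, IsLR T ∧ HasContent T ν) ∧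
    (∀ t : ℕ, ν.getD (j + t) 0 = ((trimShape^[j] B).rowsK 1).getD t 0) := by
  intro j
  induction j with
  | zero =>
    intro B
    refine ⟨B.rowsK 1, ?_, ⟨B.canon, B.canon_isLR, B.canon_hasContent⟩, ?_⟩
    · rw [SkewShape.rowsK]; exact sortDesc_sorted _
    · intro t
      simp
  | succ j ih =>
    intro B
    obtain ⟨ν', hs', ⟨T', hlr', hct'⟩, htail⟩ := ih (trimShape B)
    refine ⟨B.tops :: ν', B.liftFill_sorted hs' hct',
      ⟨B.liftFill T', B.liftFill_isLR hlr', B.liftFill_content hct'⟩, ?_⟩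
    intro t
    rw [show j + 1 + t = (j + t) + 1 by omega, List.getD_cons_succ]
    rw [htail t, Function.iterate_succ_apply]

end Lift2


section Final

/-- Transfer a skew SSYT to an abstract filling. -/
def toAbs (A : SkewShape) (T : SkewSsyt A) (hT : IsLR T) : AbsFill where
  cells := A.cells
  e := fun c => T.entry c.1 c.2
  pos := fun c hc => T.pos c.1 c.2 hc
  row_weak := fun i j1 j2 hj h1 h2 => T.row_weak i j1 j2 hj h1 h2
  col_strict := fun i1 i2 j h h1 h2 => T.col_strict i1 i2 j h h1 h2
  lattice := hT

theorem toAbs_ov (A : SkewShape) (T : SkewSsyt A) (hT : IsLR T) {k : ℕ} (hk : 1 ≤ k)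
    (i : ℕ) : A.overlap k i = (toAbs A T hT).ov k i := by
  rw [SkewShape.overlap, AbsFill.ov]
  congr 1
  ext j
  simp only [Finset.mem_filter, Finset.mem_range, Finset.mem_image]
  constructor
  · rintro ⟨h1, h2⟩
    have h0 := h2 0 (by omega)
    exact ⟨⟨(i + 0, j), h0, rfl⟩, h2⟩
  · rintro ⟨⟨c, hc, hcj⟩, h2⟩
    have h0 := h2 0 (by omega)
    exact ⟨A.col_lt_numCols h0, h2⟩

theorem toAbs_count (A : SkewShape) (T : SkewSsyt A) (hT : IsLR T) (w : ℕ) :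
    (toAbs A T hT).count w = contentCount T w := rfl

/-- Lemma 1 : prefix sums of `rows_k(A)` are bounded by the content tail sums,
for any LR filling of `A`. -/
theorem rowsK_take_le (A : SkewShape) (T : SkewSsyt A) (hT : IsLR T) {ν : List ℕ}
    (hct : HasContent T ν) {k : ℕ} (hk : 1 ≤ k) (m : ℕ) :
    ((A.rowsK k).take m).sum ≤ ∑ t ∈ Finset.range m, ν.getD (k - 1 + t) 0 := by
  set L := ((List.range (A.numRows + 1 - k)).map (A.overlap k)).filter (fun x => 0 < x)
    with hL
  have hsub : ((A.rowsK k).take m).Subperm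
      ((List.range (A.numRows + 1 - k)).map (A.overlap k)) := by
    have s1 : ((A.rowsK k).take m).Sublist (A.rowsK k) := List.take_sublist m _
    have s2 : (A.rowsK k).Perm L := by
      rw [SkewShape.rowsK]
      exact sortDesc_perm _
    have s3 : L.Sublist ((List.range (A.numRows + 1 - k)).map (A.overlap k)) :=
      List.filter_sublist
    exact (s1.subperm.trans s2.subperm).trans s3.subperm
  obtain ⟨R, hR1, hR2, hR3⟩ := subperm_sum_exists hsub
  have hcore := absfill_core (toAbs A T hT).cells.card (toAbs A T hT) (le_refl _) k hk R
  have hov : ∀ i ∈ R, A.overlap k i = (toAbs A T hT).ov k i :=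
    fun i _ => toAbs_ov A T hT hk i
  have hbound : ((A.rowsK k).take m).sum ≤
      ∑ v ∈ Finset.range R.card, (toAbs A T hT).count (k + v) := by
    rw [hR3]
    calc ∑ i ∈ R, A.overlap k i = ∑ i ∈ R, (toAbs A T hT).ov k i :=
          Finset.sum_congr rfl hov
      _ ≤ _ := hcore
  have hcnt : ∀ v, (toAbs A T hT).count (k + v) = ν.getD (k - 1 + v) 0 := by
    intro v
    rw [toAbs_count]
    have := hct (k - 1 + v)
    rw [show k - 1 + v + 1 = k + v by omega] at this
    exact this
  have hRm : R.card ≤ m := by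
    rw [hR2, List.length_take]
    omega
  calc ((A.rowsK k).take m).sum
      ≤ ∑ v ∈ Finset.range R.card, (toAbs A T hT).count (k + v) := hbound
    _ = ∑ v ∈ Finset.range R.card, ν.getD (k - 1 + v) 0 :=
        Finset.sum_congr rfl (fun v _ => hcnt v)
    _ ≤ ∑ v ∈ Finset.range m, ν.getD (k - 1 + v) 0 := by
        apply Finset.sum_le_sum_of_subset
        exact Finset.range_subset_range.mpr hRm

theorem skewssyt_ext {A : SkewShape} {T T' : SkewSsyt A}
    (h : ∀ i j, T.entry i j = T'.entry i j) : T = T' := by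
  cases T
  cases T'
  congr
  funext i j
  exact h i j

theorem entry_le_of_hasContent {A : SkewShape} {T : SkewSsyt A} {ν : List ℕ}
    (hct : HasContent T ν) {c : ℕ × ℕ} (hc : c ∈ A.cells) :
    T.entry c.1 c.2 ≤ ν.length := by
  by_contra hcon
  push_neg at hcon
  set w := T.entry c.1 c.2 with hw
  have h1 : contentCount T w = ν.getD (w - 1) 0 := by
    have := hct (w - 1)
    have hpos := T.pos c.1 c.2 hc
    rw [show w - 1 + 1 = w by omega] at this
    exact this
  have h2 : ν.getD (w - 1) 0 = 0 := List.getD_eq_default _ _ (by omega)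
  have h3 : 1 ≤ contentCount T w := by
    apply Finset.card_pos.mpr
    exact ⟨c, Finset.mem_filter.mpr ⟨hc, rfl⟩⟩
  omega

theorem finite_lr (A : SkewShape) (ν : List ℕ) :
    Finite {T : SkewSsyt A // IsLR T ∧ HasContent T ν} := by
  apply Finite.of_injective (f := fun T : {T : SkewSsyt A // IsLR T ∧ HasContent T ν} =>
    (fun c : A.cells => (⟨T.1.entry c.1.1 c.1.2,
      Nat.lt_succ_of_le (entry_le_of_hasContent T.2.2 c.2)⟩ : Fin (ν.length + 1))))
  intro T T' h
  apply Subtype.ext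
  apply skewssyt_ext
  intro i j
  by_cases hc : (i, j) ∈ A.cells
  · have := congrFun h ⟨(i, j), hc⟩
    simpa [Fin.ext_iff] using this
  · rw [T.1.zeros i j hc, T'.1.zeros i j hc]

theorem lrCoeff_pos {A : SkewShape} {ν : List ℕ}
    (h : ∃ T : SkewSsyt A, IsLR T ∧ HasContent T ν) : 1 ≤ lrCoeff A ν := by
  have hf := finite_lr A ν
  have hne : Nonempty {T : SkewSsyt A // IsLR T ∧ HasContent T ν} :=
    ⟨⟨h.choose, h.choose_spec⟩⟩
  exact Nat.card_pos

theorem exists_of_lrCoeff_pos {A : SkewShape} {ν : List ℕ} (h : 1 ≤ lrCoeff A ν) :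
    ∃ T : SkewSsyt A, IsLR T ∧ HasContent T ν := by
  by_contra hcon
  push_neg at hcon
  have hempty : IsEmpty {T : SkewSsyt A // IsLR T ∧ HasContent T ν} := by
    constructor
    rintro ⟨T, h1, h2⟩
    exact hcon T h1 h2
  rw [lrCoeff, Nat.card_of_isEmpty] at h
  omega

end Final


/-- Corollary `cor:Schurpositivity`.
Let `A` and `B` be skew shapes.  If the difference `s_A − s_B` of their skew Schur
functions is Schur-positive, then `rows_k(A) ⊴ rows_k(B)` in the dominance order for
all `k ≥ 1`. -/
theorem rowsK_dom_of_schurPositiveDiff (A B : SkewShape) (h : SchurPositiveDiff A B) :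
    ∀ k, 1 ≤ k → Dom (A.rowsK k) (B.rowsK k) := by
  intro k hk m
  obtain ⟨ν, hsort, ⟨TB, hTBlr, hTBct⟩, htail⟩ := exists_lr_tower (k - 1) B
  have hBpos : 1 ≤ lrCoeff B ν := lrCoeff_pos ⟨TB, hTBlr, hTBct⟩
  have hApos : 1 ≤ lrCoeff A ν := le_trans hBpos (h ν hsort)
  obtain ⟨TA, hTAlr, hTAct⟩ := exists_of_lrCoeff_pos hApos
  have h1 := rowsK_take_le A TA hTAlr hTAct hk m
  have h2 : ∀ t : ℕ, ν.getD (k - 1 + t) 0 = (B.rowsK k).getD t 0 := by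
    intro t
    rw [htail t]
    have h3 := rowsK_iterate_trim (k - 1) B 1 (le_refl _)
    rw [show 1 + (k - 1) = k by omega] at h3
    rw [h3]
  calc ((A.rowsK k).take m).sum
      ≤ ∑ t ∈ Finset.range m, ν.getD (k - 1 + t) 0 := h1
    _ = ∑ t ∈ Finset.range m, (B.rowsK k).getD t 0 :=
        Finset.sum_congr rfl (fun t _ => h2 t)
    _ = ((B.rowsK k).take m).sum := (take_sum_getD _ m).symm
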